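/- arXiv:2508.20648 — 4 statements merged into one kernel-verified Lean document; each statement's English description precedes it below -/
import Mathlib

section
/- Let s and d be positive integers with s ≤ d/2 and d even. Then n(d-s, d) ≥ Σ_{i=0}^{d/2 - s} C(d-s, i) + Σ_{k=1}^{s-1} 2^k · C(d-s, d/2 - s + k) + 2^s · Σ_{i=d/2}^{d-s} C(d-s, i), where C(n,i) denotes the binomial coefficient. -/
/-- Strings of length `d` over the alphabet `S = {0,1,*}`; `none` is the joker `*`. -/
abbrev JString (d : ℕ) := Fin d → Option Bool

/-- The distance between two strings over `{0,1,*}`: the number of positions where both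
entries are binary digits and they differ. -/
def jDist {d : ℕ} (u v : JString d) : ℕ :=
  (Finset.univ.filter fun i => ∃ a b : Bool, u i = some a ∧ v i = some b ∧ a ≠ b).card

/-- `nkd k d` is `n(k,d)`: the maximum size of a family of strings in `S^d` any two
distinct members of which are at distance at least `1` and at most `k`. -/
noncomputable def nkd (k d : ℕ) : ℕ :=
  sSup {m | ∃ F : Finset (JString d),
    (∀ u ∈ F, ∀ v ∈ F, u ≠ v → 1 ≤ jDist u v ∧ jDist u v ≤ k) ∧ F.card = m}


namespace NB
open Finset

variable {s : ℕ}

/-- Rank of a position in the order: true-positions ascending, then false-positions descending. -/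
def rank (r : Fin s → Bool) (j : Fin s) : ℕ :=
  if r j then (univ.filter fun j' => r j' = true ∧ j' < j).card
  else (univ.filter fun j' => r j' = true).card
    + (univ.filter fun j' => r j' = false ∧ j < j').card

lemma card_split (P : Fin s → Prop) [DecidablePred P] (j : Fin s) (hj : P j) :
    (univ.filter P).card
      = (univ.filter fun i => P i ∧ i < j).card + (univ.filter fun i => P i ∧ j < i).card + 1 := by
  classical
  have h1 : univ.filter P
      = ((univ.filter fun i => P i ∧ i < j) ∪ (univ.filter fun i => P i ∧ j < i)) ∪ {j} := by
    ext i
    simp only [mem_union, mem_filter, mem_univ, true_and, mem_singleton]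
    constructor
    · intro hP
      rcases lt_trichotomy i j with h | h | h
      · exact Or.inl (Or.inl ⟨hP, h⟩)
      · exact Or.inr h
      · exact Or.inl (Or.inr ⟨hP, h⟩)
    · rintro ((⟨h, _⟩ | ⟨h, _⟩) | rfl)
      · exact h
      · exact h
      · exact hj
  have d1 : Disjoint (univ.filter fun i => P i ∧ i < j) (univ.filter fun i => P i ∧ j < i) := by
    simp only [disjoint_left, mem_filter, mem_univ, true_and]
    rintro a ⟨_, h1⟩ ⟨_, h2⟩
    exact absurd (h1.trans h2) (lt_irrefl a)
  have d2 : Disjoint ((univ.filter fun i => P i ∧ i < j) ∪ (univ.filter fun i => P i ∧ j < i)) {j} := by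
    simp only [disjoint_right, mem_union, mem_filter, mem_univ, true_and, mem_singleton]
    rintro a rfl
    rintro (⟨_, h⟩ | ⟨_, h⟩) <;> exact absurd h (lt_irrefl a)
  rw [h1, card_union_of_disjoint d2, card_union_of_disjoint d1, card_singleton]

lemma ones_add_zeros (r : Fin s → Bool) :
    (univ.filter fun j' => r j' = true).card + (univ.filter fun j' => r j' = false).card = s := by
  classical
  have := Finset.card_filter_add_card_filter_not
    (s := (univ : Finset (Fin s))) (p := fun j' => r j' = true)
  simpa [Finset.card_univ] using this

lemma rank_lt (r : Fin s → Bool) (j : Fin s) : rank r j < s := by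
  classical
  rcases hj : r j with hT | hT
  · -- r j = false
    have hs := card_split (fun i => r i = false) j hj
    have ho := ones_add_zeros r
    simp only [rank, hj, Bool.false_eq_true, if_false]
    omega
  · have hs := card_split (fun i => r i = true) j hj
    have ho := ones_add_zeros r
    simp only [rank, hj, if_true]
    omega

lemma rank_mono_ones (r : Fin s → Bool) {j j' : Fin s} (hj : r j = true) (hj' : r j' = true)
    (h : j < j') : rank r j < rank r j' := by
  classical
  simp only [rank, hj, hj', if_true]
  apply card_lt_card
  constructor
  · intro i
    simp only [mem_filter, mem_univ, true_and]
    rintro ⟨h1, h2⟩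
    exact ⟨h1, h2.trans h⟩
  · intro hsub
    have := hsub (by simp [hj, h] : j ∈ univ.filter fun i => r i = true ∧ i < j')
    simp at this
  
lemma rank_mono_zeros (r : Fin s → Bool) {j j' : Fin s} (hj : r j = false) (hj' : r j' = false)
    (h : j < j') : rank r j' < rank r j := by
  classical
  simp only [rank, hj, hj', Bool.false_eq_true, if_false]
  have : (univ.filter fun i => r i = false ∧ j' < i).card
      < (univ.filter fun i => r i = false ∧ j < i).card := by
    apply card_lt_card
    constructor
    · intro i
      simp only [mem_filter, mem_univ, true_and]
      rintro ⟨h1, h2⟩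
      exact ⟨h1, h.trans h2⟩
    · intro hsub
      have := hsub (by simp [hj', h] : j' ∈ univ.filter fun i => r i = false ∧ j < i)
      simp at this
  omega

lemma rank_true_lt_false (r : Fin s → Bool) {j j' : Fin s} (hj : r j = true) (hj' : r j' = false) :
    rank r j < rank r j' := by
  classical
  simp only [rank, hj, hj', Bool.false_eq_true, if_false, if_true]
  have : (univ.filter fun i => r i = true ∧ i < j).card < (univ.filter fun i => r i = true).card := by
    apply card_lt_card
    constructor
    · intro i
      simp only [mem_filter, mem_univ, true_and]
      rintro ⟨h1, _⟩
      exact h1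
    · intro hsub
      have := hsub (by simp [hj] : j ∈ univ.filter fun i => r i = true)
      simp at this
  omega

lemma rank_injective (r : Fin s → Bool) : Function.Injective (rank r) := by
  intro j j' hjj
  by_contra hne
  rcases lt_trichotomy j j' with h | h | h
  · rcases hj : r j with _ | _ <;> rcases hj' : r j' with _ | _
    · exact absurd hjj (Nat.ne_of_gt (rank_mono_zeros r hj hj' h))
    · exact absurd hjj.symm (Nat.ne_of_lt (rank_true_lt_false r hj' hj))
    · exact absurd hjj (Nat.ne_of_lt (rank_true_lt_false r hj hj'))
    · exact absurd hjj (Nat.ne_of_lt (rank_mono_ones r hj hj' h))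
  · exact hne h
  · rcases hj : r j with _ | _ <;> rcases hj' : r j' with _ | _
    · exact absurd hjj (Nat.ne_of_lt (rank_mono_zeros r hj' hj h))
    · exact absurd hjj.symm (Nat.ne_of_lt (rank_true_lt_false r hj' hj))
    · exact absurd hjj (Nat.ne_of_lt (rank_true_lt_false r hj hj'))
    · exact absurd hjj.symm (Nat.ne_of_lt (rank_mono_ones r hj' hj h))


lemma rank_add_compl (r : Fin s → Bool) (j : Fin s) :
    rank r j + rank (fun i => !(r i)) j + 1 = s := by
  classical
  rcases hj : r j with _ | _
  · -- r j = false
    have hs := card_split (fun i => r i = false) j hj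
    have ho := ones_add_zeros r
    simp only [rank, hj, Bool.false_eq_true, if_false, Bool.not_false, if_true,
      Bool.not_eq_true', Bool.not_eq_false, Bool.not_eq_false']
    omega
  · have hs := card_split (fun i => r i = true) j hj
    have ho := ones_add_zeros r
    simp only [rank, hj, if_true, Bool.not_true, Bool.false_eq_true, if_false,
      Bool.not_eq_true', Bool.not_eq_false, Bool.not_eq_false']
    omega

lemma rank_update_of_ne (r : Fin s → Bool) {j₀ : Fin s} (h0 : r j₀ = false) {j : Fin s}
    (hj : j ≠ j₀) :
    rank (Function.update r j₀ true) j = rank r j + (if j₀ < j then 1 else 0) := by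
  classical
  set r' := Function.update r j₀ true with hr'
  have hrj : r' j = r j := Function.update_of_ne hj _ _
  have hTins : (univ.filter fun i => r' i = true)
      = insert j₀ (univ.filter fun i => r i = true) := by
    ext i
    by_cases hi : i = j₀ <;>
      simp [hr', hi, Function.update_of_ne, Function.update_self]
  have hmem : j₀ ∉ (univ.filter fun i => r i = true) := by simp [h0]
  rcases hcase : r j with _ | _
  · -- r j = false
    have hZer : (univ.filter fun i => r' i = false ∧ j < i)
        = (univ.filter fun i => r i = false ∧ j < i).erase j₀ := by
      ext i
      by_cases hi : i = j₀ <;>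
        simp [hr', hi, Function.update_of_ne, Function.update_self, h0]
    have h1 : rank r' j = (univ.filter fun i => r' i = true).card
        + (univ.filter fun i => r' i = false ∧ j < i).card := by
      simp only [rank, hrj, hcase, Bool.false_eq_true, if_false]
    have h2 : rank r j = (univ.filter fun i => r i = true).card
        + (univ.filter fun i => r i = false ∧ j < i).card := by
      simp only [rank, hcase, Bool.false_eq_true, if_false]
    rw [h1, h2, hTins, card_insert_of_notMem hmem, hZer]
    rcases lt_trichotomy j j₀ with hlt | heq | hgt
    · have hm : j₀ ∈ (univ.filter fun i => r i = false ∧ j < i) := by simp [h0, hlt]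
      rw [card_erase_of_mem hm, if_neg (asymm hlt)]
      have : 1 ≤ (univ.filter fun i => r i = false ∧ j < i).card := card_pos.mpr ⟨j₀, hm⟩
      omega
    · exact absurd heq hj
    · have hm : j₀ ∉ (univ.filter fun i => r i = false ∧ j < i) := by
        simp only [mem_filter, mem_univ, true_and, not_and]
        intro _
        exact asymm hgt
      rw [erase_eq_of_notMem hm, if_pos hgt]
      omega
  · -- r j = true
    have h1 : rank r' j = (univ.filter fun i => r' i = true ∧ i < j).card := by
      simp only [rank, hrj, hcase, if_true]
    have h2 : rank r j = (univ.filter fun i => r i = true ∧ i < j).card := by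
      simp only [rank, hcase, if_true]
    rcases lt_trichotomy j j₀ with hlt | heq | hgt
    · have : (univ.filter fun i => r' i = true ∧ i < j)
          = (univ.filter fun i => r i = true ∧ i < j) := by
        ext i
        by_cases hi : i = j₀
        · subst hi
          simp [Function.update_self, hr', asymm hlt]
        · simp [hr', Function.update_of_ne hi]
      rw [h1, h2, this, if_neg (asymm hlt)]
      omega
    · exact absurd heq hj
    · have : (univ.filter fun i => r' i = true ∧ i < j)
          = insert j₀ (univ.filter fun i => r i = true ∧ i < j) := by
        ext i
        by_cases hi : i = j₀
        · subst hi
          simp [Function.update_self, hr', hgt, h0]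
        · simp [hr', Function.update_of_ne hi, hi]
      have hm2 : j₀ ∉ (univ.filter fun i => r i = true ∧ i < j) := by simp [h0]
      rw [h1, h2, this, card_insert_of_notMem hm2, if_pos hgt]

lemma rank_update_self_le (r : Fin s → Bool) {j₀ : Fin s} (h0 : r j₀ = false) :
    rank (Function.update r j₀ true) j₀ ≤ rank r j₀ := by
  classical
  have h1 : rank (Function.update r j₀ true) j₀
      = (univ.filter fun i => Function.update r j₀ true i = true ∧ i < j₀).card := by
    simp only [rank, Function.update_self, if_true]
  have heq : (univ.filter fun i => Function.update r j₀ true i = true ∧ i < j₀)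
      = (univ.filter fun i => r i = true ∧ i < j₀) := by
    ext i
    by_cases hi : i = j₀
    · subst hi
      simp
    · simp [Function.update_of_ne hi]
  have h2 : rank r j₀ = (univ.filter fun i => r i = true).card
      + (univ.filter fun i => r i = false ∧ j₀ < i).card := by
    simp only [rank, h0, Bool.false_eq_true, if_false]
  rw [h1, heq, h2]
  have : (univ.filter fun i => r i = true ∧ i < j₀).card
      ≤ (univ.filter fun i => r i = true).card :=
    card_le_card (fun i hi => by simp only [mem_filter, mem_univ, true_and] at *; exact hi.1)
  omega


/-- The set of "binary extra" coordinates. -/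
def Aset (r : Fin s → Bool) (k : ℕ) : Finset (Fin s) := univ.filter fun j => rank r j < k

lemma mem_Aset {r : Fin s → Bool} {k : ℕ} {j : Fin s} : j ∈ Aset r k ↔ rank r j < k := by
  simp [Aset]

lemma card_Aset (r : Fin s → Bool) {k : ℕ} (hk : k ≤ s) : (Aset r k).card = k := by
  classical
  have himg : univ.image (rank r) = range s := by
    apply eq_of_subset_of_card_le
    · intro n hn
      simp only [mem_image, mem_univ, true_and] at hn
      obtain ⟨j, rfl⟩ := hn
      exact mem_range.mpr (rank_lt r j)
    · rw [card_range, card_image_of_injective _ (rank_injective r), card_univ, Fintype.card_fin]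
  have h1 : (Aset r k).card = ((Aset r k).image (rank r)).card :=
    (card_image_of_injective _ (rank_injective r)).symm
  have h2 : (Aset r k).image (rank r) = (univ.image (rank r)).filter (· < k) := by
    rw [Aset, filter_image]
  have h3 : (range s).filter (· < k) = range k := by
    ext n
    simp only [mem_filter, mem_range]
    omega
  rw [h1, h2, himg, h3, card_range]

lemma Aset_compl (r : Fin s → Bool) {k : ℕ} :
    Aset (fun i => !(r i)) (s - k) = (Aset r k)ᶜ := by
  ext j
  have := rank_add_compl r j
  simp only [mem_Aset, mem_compl]
  omega

lemma diff_same (r : Fin s → Bool) {k k' : ℕ} (h : k ≤ k' + 1) :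
    ((Aset r k) \ (Aset r k')).card ≤ 1 := by
  rw [card_le_one]
  intro a ha b hb
  simp only [mem_sdiff, mem_Aset] at ha hb
  exact rank_injective r (by omega : rank r a = rank r b)

lemma diff_up (r : Fin s → Bool) {j₀ : Fin s} (h0 : r j₀ = false) {k k' : ℕ} (hkk : k ≤ k') :
    ((Aset r k) \ (Aset (Function.update r j₀ true) k')).card ≤ 1 := by
  classical
  have key : ∀ a ∈ (Aset r k) \ (Aset (Function.update r j₀ true) k'),
      a ≠ j₀ ∧ rank r a + 1 = k' := by
    intro a ha
    simp only [mem_sdiff, mem_Aset, not_lt] at ha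
    obtain ⟨h1, h2⟩ := ha
    have hane : a ≠ j₀ := by
      rintro rfl
      have := rank_update_self_le r h0
      omega
    have := rank_update_of_ne r h0 hane
    constructor
    · exact hane
    · by_cases hlt : j₀ < a <;> simp [hlt] at this <;> omega
  rw [card_le_one]
  intro a ha b hb
  have ka := key a ha
  have kb := key b hb
  exact rank_injective r (by omega : rank r a = rank r b)

lemma diff_down (r : Fin s → Bool) {j₀ : Fin s} (h0 : r j₀ = true) {k k' : ℕ}
    (h1 : k ≤ k' + 1) (h2 : k' ≤ k) :
    ((Aset r k) \ (Aset (Function.update r j₀ false) k')).card ≤ 1 := by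
  classical
  set r₀ := Function.update r j₀ false with hr₀
  have h00 : r₀ j₀ = false := Function.update_self _ _ _
  have hrr : Function.update r₀ j₀ true = r := by
    funext i
    by_cases hi : i = j₀
    · subst hi
      simp [Function.update_self, h0]
    · simp [hr₀, Function.update_of_ne hi]
  have hrank : ∀ a : Fin s, a ≠ j₀ → rank r a = rank r₀ a + (if j₀ < a then 1 else 0) := by
    intro a ha
    have := rank_update_of_ne r₀ h00 ha
    rwa [hrr] at this
  rw [card_le_one]
  intro a ha b hb
  simp only [mem_sdiff, mem_Aset, not_lt] at ha hb
  -- characterize elements ≠ j₀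
  have key : ∀ c : Fin s, c ≠ j₀ → rank r c < k → k' ≤ rank r₀ c →
      rank r₀ c = k' ∧ k = k' + 1 ∧ c < j₀ ∧ rank r c = k' := by
    intro c hc hck hck'
    have hrc := hrank c hc
    by_cases hlt : j₀ < c
    · simp [hlt] at hrc
      omega
    · simp [hlt] at hrc
      have : c < j₀ := lt_of_le_of_ne (not_lt.mp hlt) hc
      omega
  by_cases haj : a = j₀ <;> by_cases hbj : b = j₀
  · rw [haj, hbj]
  · -- a = j₀, b ≠ j₀ : contradiction
    exfalso
    subst haj
    obtain ⟨hb0, hk, hblt, hbr⟩ := key b hbj hb.1 hb.2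
    -- rank r a < k = k' + 1, and rank r b = k' so rank r a < k'
    have hra : rank r a < k' := by
      rcases Nat.lt_or_ge (rank r a) k' with h | h
      · exact h
      · have : rank r a = k' := by omega
        exact absurd (rank_injective r (this.trans hbr.symm)) (Ne.symm hbj)
    rcases hbx : r b with _ | _
    · -- r b = false : use zeros monotonicity in r₀
      have hb0' : r₀ b = false := by
        rw [hr₀, Function.update_of_ne hbj]
        exact hbx
      have := rank_mono_zeros r₀ hb0' h00 hblt
      omega
    · -- r b = true : ones monotonicity in r
      have := rank_mono_ones r hbx h0 hblt
      omega
  · -- b = j₀, a ≠ j₀ : symmetric contradiction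
    exfalso
    subst hbj
    obtain ⟨ha0, hk, halt, har⟩ := key a haj ha.1 ha.2
    have hrb : rank r b < k' := by
      rcases Nat.lt_or_ge (rank r b) k' with h | h
      · exact h
      · have : rank r b = k' := by omega
        exact absurd (rank_injective r (this.trans har.symm)) (Ne.symm haj)
    rcases hax : r a with _ | _
    · have ha0' : r₀ a = false := by
        rw [hr₀, Function.update_of_ne haj]
        exact hax
      have := rank_mono_zeros r₀ ha0' h00 halt
      omega
    · have := rank_mono_ones r hax h0 halt
      omega
  · obtain ⟨ha0, _, _, _⟩ := key a haj ha.1 ha.2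
    obtain ⟨hb0, _, _, _⟩ := key b hbj hb.1 hb.2
    exact rank_injective r₀ (by omega : rank r₀ a = rank r₀ b)


variable {m : ℕ}

def wt (x : Fin m → Bool) : ℕ := (univ.filter fun i => x i = true).card

lemma wt_le (x : Fin m → Bool) : wt x ≤ m := by
  have := card_filter_le (univ : Finset (Fin m)) (fun i => x i = true)
  simpa [wt] using this

lemma wt_not (x : Fin m → Bool) : wt (fun i => !(x i)) = m - wt x := by
  have h : (univ.filter fun i => x i = true).card + (univ.filter fun i => ¬(x i = true)).card
      = m := by
    simpa using Finset.card_filter_add_card_filter_not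
      (s := (univ : Finset (Fin m))) (p := fun i => x i = true)
  have h2 : wt (fun i => !(x i)) = (univ.filter fun i => ¬(x i = true)).card := by
    unfold wt
    congr 1
    ext i
    simp
  unfold wt at *
  omega

lemma wt_update_true (y : Fin m → Bool) {i : Fin m} (h : y i = false) :
    wt (Function.update y i true) = wt y + 1 := by
  unfold wt
  have : (univ.filter fun j => Function.update y i true j = true)
      = insert i (univ.filter fun j => y j = true) := by
    ext j
    by_cases hj : j = i
    · subst hj
      simp [Function.update_self]
    · simp [Function.update_of_ne hj, hj]
  rw [this, card_insert_of_notMem (by simp [h])]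

lemma wt_update_false (y : Fin m → Bool) {i : Fin m} (h : y i = true) :
    wt y = wt (Function.update y i false) + 1 := by
  unfold wt
  have : (univ.filter fun j => y j = true)
      = insert i (univ.filter fun j => Function.update y i false j = true) := by
    ext j
    by_cases hj : j = i
    · subst hj
      simp [Function.update_self, h]
    · simp [Function.update_of_ne hj, hj]
  rw [this, card_insert_of_notMem (by simp [Function.update_self])]

def rproj (hsm : s ≤ m) (x : Fin m → Bool) : Fin s → Bool := fun j => x (Fin.castLE hsm j)

def Ax (kf : ℕ → ℕ) (hsm : s ≤ m) (x : Fin m → Bool) : Finset (Fin s) :=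
  Aset (rproj hsm x) (kf (wt x))

lemma flip_diff_le_one (kf : ℕ → ℕ) (hsm : s ≤ m)
    (hk_mono : ∀ w, kf w ≤ kf (w + 1) ∧ kf (w + 1) ≤ kf w + 1)
    (y : Fin m → Bool) (i : Fin m) :
    ((Ax kf hsm y) \ (Ax kf hsm (Function.update y i (!(y i))))).card ≤ 1 := by
  classical
  set y' := Function.update y i (!(y i)) with hy'
  by_cases hiv : (i : ℕ) < s
  · set j₀ : Fin s := ⟨(i : ℕ), hiv⟩ with hj₀
    have hcast : Fin.castLE hsm j₀ = i := by
      apply Fin.ext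
      rfl
    have hproj : rproj hsm y' = Function.update (rproj hsm y) j₀ (!(y i)) := by
      funext j
      by_cases hj : j = j₀
      · subst hj
        rw [rproj]
        rw [hcast]
        simp [hy', Function.update_self]
      · have hne : Fin.castLE hsm j ≠ i := by
          intro hc
          apply hj
          apply Fin.ext
          have : (Fin.castLE hsm j : ℕ) = (i : ℕ) := congrArg Fin.val hc
          simpa using this
        rw [rproj]
        simp [hy', Function.update_of_ne hne, Function.update_of_ne hj, rproj]
    rcases hyi : y i with _ | _
    · -- y i = false : flip up
      have hr0 : rproj hsm y j₀ = false := by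
        rw [rproj, hcast]
        exact hyi
      have hwt : wt y' = wt y + 1 := by
        rw [hy', hyi]
        exact wt_update_true y hyi
      unfold Ax
      rw [hproj, hyi, hwt]
      exact diff_up _ hr0 (hk_mono (wt y)).1
    · -- y i = true : flip down
      have hr0 : rproj hsm y j₀ = true := by
        rw [rproj, hcast]
        exact hyi
      have hwt : wt y = wt y' + 1 := by
        rw [hy', hyi]
        exact wt_update_false y hyi
      unfold Ax
      rw [hproj, hyi]
      have hmono := hk_mono (wt y')
      rw [hwt]
      exact diff_down _ hr0 (by omega) (by omega)
  · -- i outside the first s coordinates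
    have hproj : rproj hsm y' = rproj hsm y := by
      funext j
      have hne : Fin.castLE hsm j ≠ i := by
        intro hc
        apply hiv
        have : (Fin.castLE hsm j : ℕ) = (i : ℕ) := congrArg Fin.val hc
        simp at this
        omega
      rw [rproj, rproj, hy', Function.update_of_ne hne]
    unfold Ax
    rw [hproj]
    rcases hyi : y i with _ | _
    · have hwt : wt y' = wt y + 1 := by
        rw [hy', hyi]
        exact wt_update_true y hyi
      rw [hwt]
      exact diff_same _ (by have := hk_mono (wt y); omega)
    · have hwt : wt y = wt y' + 1 := by
        rw [hy', hyi]
        exact wt_update_false y hyi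
      have := hk_mono (wt y')
      rw [hwt]
      exact diff_same _ (by omega)

lemma inter_card_le (kf : ℕ → ℕ) (hsm : s ≤ m)
    (hk_compl : ∀ w, w ≤ m → kf (m - w) = s - kf w)
    (hk_mono : ∀ w, kf w ≤ kf (w + 1) ∧ kf (w + 1) ≤ kf w + 1)
    (x y : Fin m → Bool) :
    ((Ax kf hsm x) ∩ (Ax kf hsm y)).card ≤ (univ.filter fun i => x i = y i).card := by
  classical
  suffices H : ∀ n (y : Fin m → Bool), (univ.filter fun i => x i = y i).card = n →
      ((Ax kf hsm x) ∩ (Ax kf hsm y)).card ≤ n by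
    exact H _ y rfl
  intro n
  induction n with
  | zero =>
    intro y hcard
    have hy : y = fun i => !(x i) := by
      funext i
      have hi : i ∉ univ.filter fun i => x i = y i := by
        rw [card_eq_zero] at hcard
        simp [hcard]
      simp only [mem_filter, mem_univ, true_and] at hi
      rcases hx : x i with _ | _ <;> rcases hyy : y i with _ | _ <;> simp_all
    subst hy
    have hproj : rproj hsm (fun i => !(x i)) = fun j => !(rproj hsm x j) := rfl
    have hwt : wt (fun i => !(x i)) = m - wt x := wt_not x
    have : Ax kf hsm (fun i => !(x i)) = (Ax kf hsm x)ᶜ := by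
      unfold Ax
      rw [hproj, hwt, hk_compl _ (wt_le x)]
      exact Aset_compl _
    rw [this]
    simp
  | succ n ih =>
    intro y hcard
    have hpos : 0 < (univ.filter fun i => x i = y i).card := by omega
    obtain ⟨i, hi⟩ := card_pos.mp hpos
    simp only [mem_filter, mem_univ, true_and] at hi
    set y' := Function.update y i (!(y i)) with hy'
    have hcard' : (univ.filter fun j => x j = y' j).card = n := by
      have : (univ.filter fun j => x j = y' j) = (univ.filter fun j => x j = y j).erase i := by
        ext j
        by_cases hj : j = i
        · subst hj
          simp only [mem_filter, mem_univ, true_and, mem_erase, ne_eq, not_true_eq_false,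
            false_and, iff_false, hy', Function.update_self]
          rw [hi]
          cases y j <;> simp
        · simp [hy', Function.update_of_ne hj, hj]
      rw [this, card_erase_of_mem (by simp [hi]), hcard]
      omega
    have hsub : (Ax kf hsm x) ∩ (Ax kf hsm y)
        ⊆ ((Ax kf hsm x) ∩ (Ax kf hsm y')) ∪ ((Ax kf hsm y) \ (Ax kf hsm y')) := by
      intro a ha
      simp only [mem_inter, mem_union, mem_sdiff] at ha ⊢
      by_cases h' : a ∈ Ax kf hsm y'
      · exact Or.inl ⟨ha.1, h'⟩
      · exact Or.inr ⟨ha.2, h'⟩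
    calc ((Ax kf hsm x) ∩ (Ax kf hsm y)).card
        ≤ (((Ax kf hsm x) ∩ (Ax kf hsm y')) ∪ ((Ax kf hsm y) \ (Ax kf hsm y'))).card :=
          card_le_card hsub
      _ ≤ ((Ax kf hsm x) ∩ (Ax kf hsm y')).card + ((Ax kf hsm y) \ (Ax kf hsm y')).card :=
          card_union_le _ _
      _ ≤ n + 1 :=
          Nat.add_le_add (ih y' hcard') (flip_diff_le_one kf hsm hk_mono y i)


section Construction

variable (s m d : ℕ) (kf : ℕ → ℕ) (hsm : s ≤ m) (hmd : m + s = d)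

def mk (x : Fin m → Bool) (b : Fin s → Bool) : JString d := fun i =>
  if h : (i : ℕ) < m then some (x ⟨(i : ℕ), h⟩)
  else if rank (rproj hsm x) ⟨(i : ℕ) - m, by have := i.isLt; omega⟩ < kf (wt x)
    then some (b ⟨(i : ℕ) - m, by have := i.isLt; omega⟩) else none

variable {s m d kf}

lemma mk_lt (x : Fin m → Bool) (b : Fin s → Bool) (i : Fin d) (h : (i : ℕ) < m) :
    mk s m d kf hsm hmd x b i = some (x ⟨(i : ℕ), h⟩) := by
  simp [mk, h]

lemma mk_ge (x : Fin m → Bool) (b : Fin s → Bool) (i : Fin d) (h : ¬ (i : ℕ) < m)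
    (hj : (i : ℕ) - m < s) :
    mk s m d kf hsm hmd x b i
      = if rank (rproj hsm x) ⟨(i : ℕ) - m, hj⟩ < kf (wt x)
        then some (b ⟨(i : ℕ) - m, hj⟩) else none := by
  simp [mk, h]

/-- The upper bound on the distance between two members of the family. -/
lemma jDist_mk_le
    (hk_compl : ∀ w, w ≤ m → kf (m - w) = s - kf w)
    (hk_mono : ∀ w, kf w ≤ kf (w + 1) ∧ kf (w + 1) ≤ kf w + 1)
    (hs : 0 < s)
    (x y : Fin m → Bool) (b c : Fin s → Bool) :
    jDist (mk s m d kf hsm hmd x b) (mk s m d kf hsm hmd y c) ≤ m := by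
  classical
  unfold jDist
  set u := mk s m d kf hsm hmd x b with hu
  set v := mk s m d kf hsm hmd y c with hv
  set S : Finset (Fin d) :=
    univ.filter fun i => ∃ a b : Bool, u i = some a ∧ v i = some b ∧ a ≠ b with hS
  have hmemS : ∀ i : Fin d, i ∈ S → ∃ a b : Bool, u i = some a ∧ v i = some b ∧ a ≠ b := by
    intro i hi
    rw [hS, mem_filter] at hi
    exact hi.2
  have hsplit := Finset.card_filter_add_card_filter_not
    (s := S) (p := fun i : Fin d => (i : ℕ) < m)
  have hb1 : (S.filter fun i : Fin d => (i : ℕ) < m).card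
      ≤ (univ.filter fun i : Fin m => ¬ x i = y i).card := by
    apply card_le_card_of_injOn
      (fun i : Fin d => if h : (i : ℕ) < m then (⟨(i : ℕ), h⟩ : Fin m)
        else ⟨0, lt_of_lt_of_le hs hsm⟩)
    · intro i hi
      rw [mem_coe, mem_filter] at hi
      obtain ⟨a, b', ha, hb', hab⟩ := hmemS i hi.1
      have him := hi.2
      simp only [mem_coe, mem_filter, mem_univ, true_and]
      rw [dif_pos him]
      rw [hu, mk_lt hsm hmd x b i him] at ha
      rw [hv, mk_lt hsm hmd y c i him] at hb'
      intro hxy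
      apply hab
      rw [Option.some_inj] at ha hb'
      rw [← ha, ← hb', hxy]
    · intro i hi i' hi' hii
      simp only [coe_filter, Set.mem_setOf_eq] at hi hi'
      beta_reduce at hii
      rw [dif_pos hi.2, dif_pos hi'.2] at hii
      have hval : (i : ℕ) = (i' : ℕ) := by simpa using hii
      exact Fin.ext hval
  have hb2 : (S.filter fun i : Fin d => ¬ (i : ℕ) < m).card
      ≤ ((Ax kf hsm x) ∩ (Ax kf hsm y)).card := by
    apply card_le_card_of_injOn
      (fun i : Fin d => (⟨(i : ℕ) - m, by have := i.isLt; omega⟩ : Fin s))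
    · intro i hi
      rw [mem_coe, mem_filter] at hi
      obtain ⟨a, b', ha, hb', hab⟩ := hmemS i hi.1
      have him := hi.2
      have hj : (i : ℕ) - m < s := by have := i.isLt; omega
      rw [hu, mk_ge hsm hmd x b i him hj] at ha
      rw [hv, mk_ge hsm hmd y c i him hj] at hb'
      simp only [mem_coe, mem_inter, Ax, mem_Aset]
      constructor
      · by_contra hcon
        rw [if_neg hcon] at ha
        exact Option.some_ne_none _ ha.symm
      · by_contra hcon
        rw [if_neg hcon] at hb'
        exact Option.some_ne_none _ hb'.symm
    · intro i hi i' hi' hii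
      simp only [coe_filter, Set.mem_setOf_eq] at hi hi'
      beta_reduce at hii
      have hvv : (i : ℕ) - m = (i' : ℕ) - m := congrArg Fin.val hii
      have h1 := hi.2
      have h2 := hi'.2
      apply Fin.ext
      omega
  have hca : (univ.filter fun i : Fin m => ¬ x i = y i).card
      + (univ.filter fun i : Fin m => x i = y i).card = m := by
    have := Finset.card_filter_add_card_filter_not
      (s := (univ : Finset (Fin m))) (p := fun i => x i = y i)
    simp only [card_univ, Fintype.card_fin] at this
    omega
  have hinter := inter_card_le kf hsm hk_compl hk_mono x y
  omega

end Construction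


section Construction2
variable {s m d : ℕ} {kf : ℕ → ℕ} (hsm : s ≤ m) (hmd : m + s = d)

lemma jDist_mk_pos (x y : Fin m → Bool) (b c : Fin s → Bool)
    (hne : mk s m d kf hsm hmd x b ≠ mk s m d kf hsm hmd y c) :
    1 ≤ jDist (mk s m d kf hsm hmd x b) (mk s m d kf hsm hmd y c) := by
  classical
  unfold jDist
  rw [Nat.succ_le_iff, card_pos]
  set u := mk s m d kf hsm hmd x b with hu
  set v := mk s m d kf hsm hmd y c with hv
  have key : ∃ i : Fin d, ∃ a a' : Bool, u i = some a ∧ v i = some a' ∧ a ≠ a' := by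
    by_cases hxy : x = y
    · subst hxy
      obtain ⟨i, hi⟩ := Function.ne_iff.mp hne
      by_cases him : (i : ℕ) < m
      · exfalso
        apply hi
        rw [hu, hv, mk_lt hsm hmd x b i him, mk_lt hsm hmd x c i him]
      · have hj : (i : ℕ) - m < s := by have := i.isLt; omega
        rw [hu, mk_ge hsm hmd x b i him hj] at hi
        rw [hv, mk_ge hsm hmd x c i him hj] at hi
        by_cases hcon : rank (rproj hsm x) ⟨(i : ℕ) - m, hj⟩ < kf (wt x)
        · rw [if_pos hcon, if_pos hcon] at hi
          refine ⟨i, b ⟨(i : ℕ) - m, hj⟩, c ⟨(i : ℕ) - m, hj⟩, ?_⟩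
          refine ⟨by rw [hu, mk_ge hsm hmd x b i him hj, if_pos hcon],
            by rw [hv, mk_ge hsm hmd x c i him hj, if_pos hcon], ?_⟩
          intro hbc
          exact hi (by rw [hbc])
        · rw [if_neg hcon, if_neg hcon] at hi
          exact absurd rfl hi
    · obtain ⟨i₀, hi₀⟩ := Function.ne_iff.mp hxy
      have hmle : m ≤ d := by omega
      set i : Fin d := Fin.castLE hmle i₀ with hidef
      have him : (i : ℕ) < m := i₀.isLt
      refine ⟨i, x i₀, y i₀, ?_, ?_, ?_⟩
      · rw [hu, mk_lt hsm hmd x b i him]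
        congr 1
      · rw [hv, mk_lt hsm hmd y c i him]
        congr 1
      · exact hi₀
  obtain ⟨i, a, a', h1, h2, h3⟩ := key
  exact ⟨i, mem_filter.mpr ⟨mem_univ _, a, a', h1, h2, h3⟩⟩

/-- Recover the first part from a member of the family. -/
lemma mk_inj_x {x x' : Fin m → Bool} {b b' : Fin s → Bool}
    (h : mk s m d kf hsm hmd x b = mk s m d kf hsm hmd x' b') : x = x' := by
  funext i₀
  have hmle : m ≤ d := by omega
  have him : ((Fin.castLE hmle i₀ : Fin d) : ℕ) < m := i₀.isLt
  have := congrFun h (Fin.castLE hmle i₀)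
  rw [mk_lt hsm hmd x b _ him, mk_lt hsm hmd x' b' _ him] at this
  have := Option.some_inj.mp this
  simpa using this

def famF (s m d : ℕ) (kf : ℕ → ℕ) (hsm : s ≤ m) (hmd : m + s = d) : Finset (JString d) :=
  univ.biUnion fun x : Fin m → Bool =>
    (Fintype.piFinset fun j : Fin s =>
      if j ∈ Ax kf hsm x then ({false, true} : Finset Bool) else {false}).image
      (mk s m d kf hsm hmd x)

lemma card_famF (hk_le : ∀ w, kf w ≤ s) :
    (famF s m d kf hsm hmd).card = ∑ x : Fin m → Bool, 2 ^ kf (wt x) := by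
  classical
  rw [famF, card_biUnion]
  · apply Finset.sum_congr rfl
    intro x _
    rw [card_image_of_injOn]
    · rw [Fintype.card_piFinset]
      have h1 : ∀ j : Fin s,
          ((if j ∈ Ax kf hsm x then ({false, true} : Finset Bool) else {false})).card
          = if j ∈ Ax kf hsm x then 2 else 1 := by
        intro j
        by_cases hj : j ∈ Ax kf hsm x <;> simp [hj]
      rw [Finset.prod_congr rfl fun j _ => h1 j]
      have h2 : (∏ j : Fin s, if j ∈ Ax kf hsm x then 2 else 1)
          = 2 ^ (Ax kf hsm x).card := by
        rw [Finset.prod_ite, Finset.prod_const, Finset.prod_const, one_pow, mul_one,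
          Finset.filter_mem_eq_inter, univ_inter]
      rw [h2, Ax, card_Aset _ (hk_le _)]
    · intro b hb b' hb' hbb
      simp only [Finset.mem_coe, Fintype.mem_piFinset] at hb hb'
      funext j
      have hij : m + (j : ℕ) < d := by have := j.isLt; omega
      set i : Fin d := ⟨m + (j : ℕ), hij⟩ with hidef
      have him : ¬ (i : ℕ) < m := by simp [hidef]
      have hjj : (i : ℕ) - m < s := by simp [hidef]
      have hji : (⟨(i : ℕ) - m, hjj⟩ : Fin s) = j := by
        apply Fin.ext
        simp [hidef]
      have := congrFun hbb i
      rw [mk_ge hsm hmd x b i him hjj, mk_ge hsm hmd x b' i him hjj, hji] at this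
      by_cases hcon : rank (rproj hsm x) j < kf (wt x)
      · rw [if_pos hcon, if_pos hcon] at this
        exact Option.some_inj.mp this
      · have hnj : j ∉ Ax kf hsm x := by simp [Ax, mem_Aset, hcon]
        have e1 := hb j
        have e2 := hb' j
        rw [if_neg hnj] at e1 e2
        simp only [mem_singleton] at e1 e2
        rw [e1, e2]
  · intro x _ x' _ hxx
    simp only [disjoint_left]
    intro u hu hu'
    simp only [mem_image] at hu hu'
    obtain ⟨b, _, rfl⟩ := hu
    obtain ⟨b', _, hb'⟩ := hu'
    exact hxx (mk_inj_x hsm hmd hb'.symm)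

end Construction2

variable {m : ℕ}

lemma card_wt_eq (m w : ℕ) :
    ((univ : Finset (Fin m → Bool)).filter fun x => wt x = w).card = m.choose w := by
  classical
  have : m.choose w = (Finset.powersetCard w (univ : Finset (Fin m))).card := by
    rw [card_powersetCard, card_univ, Fintype.card_fin]
  rw [this]
  apply card_bij (fun (x : Fin m → Bool) _ => univ.filter fun i => x i = true)
  · intro x hx
    simp only [mem_filter, mem_univ, true_and] at hx
    rw [mem_powersetCard]
    exact ⟨subset_univ _, hx⟩
  · intro x hx x' hx' hxx
    funext i
    have := Finset.ext_iff.mp hxx i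
    simp only [mem_filter, mem_univ, true_and] at this
    rcases h1 : x i with _ | _ <;> rcases h2 : x' i with _ | _ <;> simp_all
  · intro S hS
    rw [mem_powersetCard] at hS
    refine ⟨fun i => decide (i ∈ S), ?_, ?_⟩
    · simp only [mem_filter, mem_univ, true_and]
      simp only [wt]
      have : (univ.filter fun i => decide (i ∈ S) = true) = S := by
        ext i
        simp
      rw [this, hS.2]
    · ext i
      simp

lemma sum_wt (g : ℕ → ℕ) :
    ∑ x : Fin m → Bool, g (wt x) = ∑ w ∈ range (m + 1), m.choose w * g w := by
  classical
  rw [← Finset.sum_fiberwise_of_maps_to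
    (fun (x : Fin m → Bool) (_ : x ∈ univ) => mem_range.mpr (Nat.lt_succ_of_le (wt_le x)))
    (fun x => g (wt x))]
  apply Finset.sum_congr rfl
  intro w _
  have : ∀ x ∈ (univ : Finset (Fin m → Bool)).filter fun x => wt x = w,
      g (wt x) = g w := by
    intro x hx
    rw [(mem_filter.mp hx).2]
  rw [Finset.sum_congr rfl this, Finset.sum_const, card_wt_eq, smul_eq_mul]


lemma sum_split (s d : ℕ) (hs : 0 < s) (hsd : 2 * s ≤ d) (hde : d % 2 = 0) :
    ∑ w ∈ range (d - s + 1), (d - s).choose w * 2 ^ (min s (w - (d / 2 - s)))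
      = ∑ i ∈ Finset.range (d / 2 - s + 1), (d - s).choose i
        + ∑ k ∈ Finset.Icc 1 (s - 1), 2 ^ k * (d - s).choose (d / 2 - s + k)
        + 2 ^ s * ∑ i ∈ Finset.Icc (d / 2) (d - s), (d - s).choose i := by
  have hobv : d / 2 * 2 = d := by omega
  set m := d - s with hm
  set h := d / 2 with hh
  set f : ℕ → ℕ := fun w => m.choose w * 2 ^ (min s (w - (h - s))) with hf
  have hb1 : h - s + 1 ≤ h := by omega
  have hb2 : h ≤ m + 1 := by omega
  have e1 : ∑ w ∈ Ico 0 (h - s + 1), f w + ∑ w ∈ Ico (h - s + 1) (m + 1), f w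
      = ∑ w ∈ Ico 0 (m + 1), f w :=
    sum_Ico_consecutive f (Nat.zero_le _) (by omega)
  have e2 : ∑ w ∈ Ico (h - s + 1) h, f w + ∑ w ∈ Ico h (m + 1), f w
      = ∑ w ∈ Ico (h - s + 1) (m + 1), f w :=
    sum_Ico_consecutive f hb1 hb2
  have p1 : ∑ w ∈ Ico 0 (h - s + 1), f w = ∑ i ∈ range (h - s + 1), m.choose i := by
    rw [← range_eq_Ico]
    apply sum_congr rfl
    intro w hw
    rw [mem_range] at hw
    have : min s (w - (h - s)) = 0 := by omega
    rw [hf]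
    simp only
    rw [this, pow_zero, mul_one]
  have p2 : ∑ w ∈ Ico (h - s + 1) h, f w
      = ∑ k ∈ Finset.Icc 1 (s - 1), 2 ^ k * m.choose (h - s + k) := by
    apply sum_nbij' (i := fun w => w - (h - s)) (j := fun k => h - s + k)
    · intro w hw
      rw [mem_Ico] at hw
      rw [mem_Icc]
      omega
    · intro k hk
      rw [mem_Icc] at hk
      rw [mem_Ico]
      omega
    · intro w hw
      rw [mem_Ico] at hw
      omega
    · intro k hk
      rw [mem_Icc] at hk
      omega
    · intro w hw
      rw [mem_Ico] at hw
      rw [hf]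
      simp only
      have h1 : min s (w - (h - s)) = w - (h - s) := by omega
      have h2 : h - s + (w - (h - s)) = w := by omega
      rw [h1, h2, mul_comm]
  have p3 : ∑ w ∈ Ico h (m + 1), f w = 2 ^ s * ∑ i ∈ Finset.Icc h m, m.choose i := by
    rw [mul_sum, ← Finset.Ico_add_one_right_eq_Icc]
    apply sum_congr rfl
    intro w hw
    rw [mem_Ico] at hw
    rw [hf]
    simp only
    have h1 : min s (w - (h - s)) = s := by omega
    rw [h1, mul_comm]
  rw [range_eq_Ico, ← e1, ← e2, p1, p2, p3, range_eq_Ico]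
  ring


end NB

/-- Let `s` and `d` be positive integers with `s ≤ d/2` and `d` even. Then
`n(d-s,d) ≥ Σ_{i=0}^{d/2-s} C(d-s,i) + Σ_{k=1}^{s-1} 2^k C(d-s, d/2-s+k)
  + 2^s Σ_{i=d/2}^{d-s} C(d-s,i)`. -/
theorem neighborly_lower_bound (s d : ℕ) (hs : 0 < s) (hd : 0 < d)
    (hsd : 2 * s ≤ d) (hde : Even d) :
    ∑ i ∈ Finset.range (d / 2 - s + 1), (d - s).choose i
      + ∑ k ∈ Finset.Icc 1 (s - 1), 2 ^ k * (d - s).choose (d / 2 - s + k)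
      + 2 ^ s * ∑ i ∈ Finset.Icc (d / 2) (d - s), (d - s).choose i
    ≤ nkd (d - s) d := by
  classical
  have hde2 : d % 2 = 0 := Nat.even_iff.mp hde
  have hsm : s ≤ d - s := by omega
  have hmd : (d - s) + s = d := by omega
  set kf : ℕ → ℕ := fun w => min s (w - (d / 2 - s)) with hkf
  have hk_le : ∀ w, kf w ≤ s := fun w => min_le_left _ _
  have hk_compl : ∀ w, w ≤ d - s → kf ((d - s) - w) = s - kf w := by
    intro w hw
    simp only [hkf]
    omega
  have hk_mono : ∀ w, kf w ≤ kf (w + 1) ∧ kf (w + 1) ≤ kf w + 1 := by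
    intro w
    simp only [hkf]
    constructor <;> omega
  have hcard : (NB.famF s (d - s) d kf hsm hmd).card
      = ∑ i ∈ Finset.range (d / 2 - s + 1), (d - s).choose i
        + ∑ k ∈ Finset.Icc 1 (s - 1), 2 ^ k * (d - s).choose (d / 2 - s + k)
        + 2 ^ s * ∑ i ∈ Finset.Icc (d / 2) (d - s), (d - s).choose i := by
    rw [NB.card_famF hsm hmd hk_le, NB.sum_wt (fun w => 2 ^ kf w),
      ← NB.sum_split s d hs hsd hde2]
  have hdist : ∀ u ∈ NB.famF s (d - s) d kf hsm hmd, ∀ v ∈ NB.famF s (d - s) d kf hsm hmd,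
      u ≠ v → 1 ≤ jDist u v ∧ jDist u v ≤ d - s := by
    intro u hu v hv huv
    rw [NB.famF, Finset.mem_biUnion] at hu hv
    obtain ⟨x, -, hx⟩ := hu
    rw [Finset.mem_image] at hx
    obtain ⟨b, -, rfl⟩ := hx
    obtain ⟨y, -, hy⟩ := hv
    rw [Finset.mem_image] at hy
    obtain ⟨c, -, rfl⟩ := hy
    exact ⟨NB.jDist_mk_pos hsm hmd x y b c huv,
      NB.jDist_mk_le hsm hmd hk_compl hk_mono hs x y b c⟩
  apply le_csSup
  · refine ⟨3 ^ d, ?_⟩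
    rintro n ⟨G, -, rfl⟩
    have h1 : G.card ≤ Fintype.card (JString d) := Finset.card_le_univ G
    have h2 : Fintype.card (JString d) = 3 ^ d := by
      rw [Fintype.card_fun]
      simp
    omega
  · exact ⟨NB.famF s (d - s) d kf hsm hmd, hdist, hcard⟩
end

section
/- For every fixed positive integer s, the limit as d → ∞ of n(d-s, d)/2^d equals (2^s + 1)/2^{s+1}. -/
namespace NeighborlyAux
open Finset

variable {d : ℕ}

/-- number of jokers -/
def jk (u : JString d) : ℕ := #(univ.filter fun i => u i = none)

/-- the cube of binary completions of `u` -/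
def cube (u : JString d) : Finset (Fin d → Bool) :=
  Fintype.piFinset (fun i => (u i).elim Finset.univ (fun a => {a}))

lemma mem_cube {u : JString d} {x : Fin d → Bool} :
    x ∈ cube u ↔ ∀ i a, u i = some a → x i = a := by
  simp only [cube, Fintype.mem_piFinset]
  constructor
  · intro h i a ha
    have := h i
    rw [ha] at this
    simpa using this
  · intro h i
    cases hu : u i with
    | none => simp
    | some a => simpa using h i a hu

lemma card_cube (u : JString d) : #(cube u) = 2 ^ jk u := by
  rw [cube, Fintype.card_piFinset]
  rw [jk, ← Finset.prod_const (b := 2),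
    ← Finset.prod_filter_mul_prod_filter_not univ (fun i => u i = none)
      (fun i => #((u i).elim Finset.univ (fun a => ({a} : Finset Bool))))]
  have h1 : ∀ i ∈ univ.filter (fun i => u i = none),
      #((u i).elim Finset.univ (fun a => ({a} : Finset Bool))) = 2 := by
    intro i hi
    simp only [mem_filter] at hi
    rw [hi.2]; simp
  have h2 : ∀ i ∈ univ.filter (fun i => ¬ u i = none),
      #((u i).elim Finset.univ (fun a => ({a} : Finset Bool))) = 1 := by
    intro i hi
    simp only [mem_filter] at hi
    rcases Option.ne_none_iff_exists'.mp hi.2 with ⟨a, ha⟩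
    rw [ha]; simp
  rw [Finset.prod_congr rfl h1, Finset.prod_congr rfl h2, Finset.prod_const_one, mul_one]

/-- flip of a string: negate binary entries -/
def flip (u : JString d) : JString d := fun i => (u i).map not

lemma mem_cube_flip {u : JString d} {x : Fin d → Bool} :
    x ∈ cube (flip u) ↔ ∀ i a, u i = some a → x i = !a := by
  rw [mem_cube]
  constructor
  · intro h i a ha; exact h i (!a) (by simp [flip, ha])
  · intro h i a ha
    simp only [flip, Option.map_eq_some_iff] at ha
    rcases ha with ⟨b, hb, rfl⟩
    exact h i b hb

lemma jk_flip (u : JString d) : jk (flip u) = jk u := by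
  unfold jk
  congr 1
  apply filter_congr
  intro i _
  simp [flip, Option.map_eq_none_iff]

lemma cube_nonempty (u : JString d) : (cube u).Nonempty := by
  rw [← Finset.card_pos, card_cube]; positivity

/-- distance ≥ 1 gives disjoint cubes -/
lemma disj_of_dist (u v : JString d) (h : 1 ≤ jDist u v) :
    Disjoint (cube u) (cube v) := by
  rw [Finset.disjoint_left]
  intro x hxu hxv
  rcases Finset.Nonempty.exists_mem (Finset.card_pos.mp h) with ⟨i, hi⟩
  simp only [mem_filter] at hi
  rcases hi.2 with ⟨a, b, ha, hb, hab⟩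
  exact hab ((mem_cube.mp hxu i a ha) ▸ (mem_cube.mp hxv i b hb) ▸ rfl)

lemma flip_disj_flip {u v : JString d} (h : Disjoint (cube u) (cube v)) :
    Disjoint (cube (flip u)) (cube (flip v)) := by
  rw [Finset.disjoint_left] at h ⊢
  intro x hxu hxv
  refine h (a := fun i => !(x i)) ?_ ?_ <;>
  · rw [mem_cube]
    intro i a ha
    first
      | rw [mem_cube_flip.mp hxu i a ha]; simp
      | rw [mem_cube_flip.mp hxv i a ha]; simp

/-- key agreement lemma: if jDist u v ≤ d - s (and s ≤ d), then the number of coordinates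
where u and v are binary and equal is at least s - jk u - jk v -/
lemma agree_lemma {s : ℕ} (hsd : s ≤ d) (u v : JString d) (h : jDist u v ≤ d - s) :
    s ≤ #(univ.filter fun i => ∃ b : Bool, u i = some b ∧ v i = some b) + jk u + jk v := by
  classical
  set A := univ.filter fun i => ∃ b : Bool, u i = some b ∧ v i = some b with hA
  set Dd := univ.filter fun i => ∃ a b : Bool, u i = some a ∧ v i = some b ∧ a ≠ b with hD
  set Ju := univ.filter fun i => u i = none with hJu
  set Jv := univ.filter fun i => v i = none with hJv
  have hcover : (univ : Finset (Fin d)) ⊆ A ∪ Dd ∪ Ju ∪ Jv := by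
    intro i _
    simp only [mem_union, hA, hD, hJu, hJv, mem_filter, mem_univ, true_and]
    cases hu : u i with
    | none => tauto
    | some a =>
      cases hv : v i with
      | none => tauto
      | some b =>
        by_cases hab : a = b
        · subst hab; exact Or.inl (Or.inl (Or.inl ⟨a, rfl, rfl⟩))
        · exact Or.inl (Or.inl (Or.inr ⟨a, b, rfl, rfl, hab⟩))
  have hcard : d ≤ #A + #Dd + #Ju + #Jv := by
    calc d = #(univ : Finset (Fin d)) := by simp
    _ ≤ #(A ∪ Dd ∪ Ju ∪ Jv) := Finset.card_le_card hcover
    _ ≤ #A + #Dd + #Ju + #Jv := by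
        refine le_trans (card_union_le _ _) ?_
        refine Nat.add_le_add_right ?_ _
        refine le_trans (card_union_le _ _) ?_
        exact Nat.add_le_add_right (card_union_le _ _) _
  have hdd : jDist u v = #Dd := rfl
  have hju : jk u = #Ju := rfl
  have hjv : jk v = #Jv := rfl
  rw [hju, hjv]
  omega

end NeighborlyAux

namespace NeighborlyAux
open Finset

variable {d s : ℕ}

def Valid (s d : ℕ) (F : Finset (JString d)) : Prop :=
  ∀ u ∈ F, ∀ v ∈ F, u ≠ v → 1 ≤ jDist u v ∧ jDist u v ≤ d - s

/-- measure inequality (A): total cube measure at most 2^d -/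
lemma ineqA {F : Finset (JString d)} (hF : Valid s d F) :
    ∑ u ∈ F, 2 ^ jk u ≤ 2 ^ d := by
  classical
  have hdisj : ∀ u ∈ F, ∀ v ∈ F, u ≠ v → Disjoint (cube u) (cube v) :=
    fun u hu v hv huv => disj_of_dist u v (hF u hu v hv huv).1
  calc ∑ u ∈ F, 2 ^ jk u = ∑ u ∈ F, #(cube u) := by
        exact Finset.sum_congr rfl (fun u _ => (card_cube u).symm)
    _ = #(F.biUnion cube) := (Finset.card_biUnion hdisj).symm
    _ ≤ Fintype.card (Fin d → Bool) := Finset.card_le_univ _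
    _ = 2 ^ d := by simp [Fintype.card_fun]

/-- measure inequality (B_ℓ): for ℓ < s ≤ d, cubes with few jokers plus flipped cubes
with very few jokers are all disjoint. -/
lemma ineqB {F : Finset (JString d)} (hF : Valid s d F) (hsd : s ≤ d) {ℓ : ℕ} (hℓ : ℓ < s) :
    (∑ u ∈ F.filter (fun u => jk u ≤ s - 1 - ℓ), 2 ^ jk u)
      + (∑ u ∈ F.filter (fun u => jk u ≤ ℓ), 2 ^ jk u) ≤ 2 ^ d := by
  classical
  set T1 := F.filter (fun u => jk u ≤ s - 1 - ℓ) with hT1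
  set T2 := F.filter (fun u => jk u ≤ ℓ) with hT2
  -- key cross disjointness : u ∈ T1, v ∈ T2 → cube u and cube (flip v) are disjoint
  have hcross : ∀ u ∈ T1, ∀ v ∈ T2, Disjoint (cube u) (cube (flip v)) := by
    intro u hu v hv
    simp only [hT1, hT2, mem_filter] at hu hv
    by_cases huv : u = v
    · -- same string: it has a binary coordinate since jk v ≤ ℓ < s ≤ d
      subst huv
      have hj : jk u < d := lt_of_le_of_lt hv.2 (lt_of_lt_of_le hℓ hsd)
      have : ∃ i a, u i = some a := by
        by_contra hc
        push_neg at hc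
        have : jk u = d := by
          unfold jk
          rw [Finset.filter_true_of_mem, card_univ, Fintype.card_fin]
          intro i _
          cases hui : u i with
          | none => rfl
          | some a => exact absurd hui (hc i a)
        omega
      rcases this with ⟨i, a, hia⟩
      rw [Finset.disjoint_left]
      intro x hx hx'
      have h1 := mem_cube.mp hx i a hia
      have h2 := mem_cube_flip.mp hx' i a hia
      rw [h1] at h2
      exact (Bool.eq_not_self a).mp h2
    · -- distinct strings: agreement coordinate
      have hag := agree_lemma hsd u v (hF u hu.1 v hv.1 huv).2
      have hpos : 0 < #(univ.filter fun i => ∃ b : Bool, u i = some b ∧ v i = some b) := by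
        omega
      rcases Finset.Nonempty.exists_mem (Finset.card_pos.mp hpos) with ⟨i, hi⟩
      simp only [mem_filter] at hi
      rcases hi.2 with ⟨b, hub, hvb⟩
      rw [Finset.disjoint_left]
      intro x hx hx'
      have h1 := mem_cube.mp hx i b hub
      have h2 := mem_cube_flip.mp hx' i b hvb
      rw [h1] at h2
      exact (Bool.eq_not_self b).mp h2
  have hd1 : ∀ u ∈ T1, ∀ v ∈ T1, u ≠ v → Disjoint (cube u) (cube v) := by
    intro u hu v hv huv
    simp only [hT1, mem_filter] at hu hv
    exact disj_of_dist u v (hF u hu.1 v hv.1 huv).1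
  have hd2 : ∀ u ∈ T2, ∀ v ∈ T2, u ≠ v → Disjoint (cube (flip u)) (cube (flip v)) := by
    intro u hu v hv huv
    simp only [hT2, mem_filter] at hu hv
    exact flip_disj_flip (disj_of_dist u v (hF u hu.1 v hv.1 huv).1)
  have e1 : ∑ u ∈ T1, 2 ^ jk u = #(T1.biUnion cube) := by
    rw [Finset.card_biUnion hd1]
    exact Finset.sum_congr rfl (fun u _ => (card_cube u).symm)
  have e2 : ∑ u ∈ T2, 2 ^ jk u = #(T2.biUnion (fun u => cube (flip u))) := by
    rw [Finset.card_biUnion hd2]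
    exact Finset.sum_congr rfl (fun u _ => by rw [card_cube, jk_flip])
  have hdisjU : Disjoint (T1.biUnion cube) (T2.biUnion (fun u => cube (flip u))) := by
    rw [Finset.disjoint_left]
    intro x hx hx'
    rcases Finset.mem_biUnion.mp hx with ⟨u, hu, hxu⟩
    rcases Finset.mem_biUnion.mp hx' with ⟨v, hv, hxv⟩
    exact Finset.disjoint_left.mp (hcross u hu v hv) hxu hxv
  calc (∑ u ∈ T1, 2 ^ jk u) + (∑ u ∈ T2, 2 ^ jk u)
      = #(T1.biUnion cube) + #(T2.biUnion (fun u => cube (flip u))) := by rw [e1, e2]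
    _ = #((T1.biUnion cube) ∪ (T2.biUnion (fun u => cube (flip u)))) :=
        (Finset.card_union_of_disjoint hdisjU).symm
    _ ≤ Fintype.card (Fin d → Bool) := Finset.card_le_univ _
    _ = 2 ^ d := by simp [Fintype.card_fun]

/-- geometric sum in ℕ -/
lemma geom_two (m : ℕ) : ∑ j ∈ range m, 2 ^ j = 2 ^ m - 1 := by
  induction m with
  | zero => simp
  | succ n ih =>
    rw [Finset.sum_range_succ, ih]
    have : 1 ≤ 2 ^ n := Nat.one_le_two_pow
    have : (2:ℕ) ^ (n+1) = 2 * 2 ^ n := by ring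
    omega

lemma geom_two' (m : ℕ) : ∑ j ∈ range m, 2 ^ (m - j) = 2 ^ (m + 1) - 2 := by
  rw [← Finset.sum_range_reflect (fun j => 2 ^ (m - j)) m]
  have : ∀ j ∈ range m, 2 ^ (m - (m - 1 - j)) = 2 ^ (j + 1) := by
    intro j hj
    rw [Finset.mem_range] at hj
    congr 1
    omega
  rw [Finset.sum_congr rfl this]
  have : ∀ j ∈ range m, 2 ^ (j+1) = 2 * 2 ^ j := fun j _ => by ring
  rw [Finset.sum_congr rfl this, ← Finset.mul_sum, geom_two]
  have : 1 ≤ 2 ^ m := Nat.one_le_two_pow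
  have : (2:ℕ) ^ (m+1) = 2 * 2 ^ m := by ring
  omega

/-- pairing bound: b monotone, b j + b (s-1-j) ≤ D → weighted sum bound -/
lemma pair_sum {D : ℕ} (s : ℕ) (b : ℕ → ℕ) (hmono : Monotone b)
    (hb : ∀ j, j < s → b j + b (s - 1 - j) ≤ D) :
    ∑ j ∈ range s, 2 ^ (s - j) * b j ≤ (2 ^ s - 1) * D := by
  have key : ∀ j, j < s →
      2 * (2 ^ (s - j) * b j) + 2 * (2 ^ (j + 1) * b (s - 1 - j))
        ≤ (2 ^ (s - j) + 2 ^ (j + 1)) * D := by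
    intro j hj
    set w1 := 2 ^ (s - j) with hw1
    set w2 := 2 ^ (j + 1) with hw2
    set b1 := b j
    set b2 := b (s - 1 - j)
    have hbD : b1 + b2 ≤ D := hb j hj
    have hmain : 2 * (w1 * b1) + 2 * (w2 * b2) ≤ (w1 + w2) * (b1 + b2) := by
      rcases le_or_gt (j : ℕ) (s - 1 - j) with hc | hc
      · have hww : w2 ≤ w1 := Nat.pow_le_pow_right (by norm_num) (by omega)
        have hbb : b1 ≤ b2 := hmono hc
        nlinarith
      · have hww : w1 ≤ w2 := Nat.pow_le_pow_right (by norm_num) (by omega)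
        have hbb : b2 ≤ b1 := hmono (le_of_lt hc)
        nlinarith
    calc 2 * (w1 * b1) + 2 * (w2 * b2) ≤ (w1 + w2) * (b1 + b2) := hmain
      _ ≤ (w1 + w2) * D := Nat.mul_le_mul_left _ hbD
  -- sum the key inequality over j
  have hsum : ∑ j ∈ range s, (2 * (2 ^ (s - j) * b j) + 2 * (2 ^ (j + 1) * b (s - 1 - j)))
      ≤ ∑ j ∈ range s, (2 ^ (s - j) + 2 ^ (j + 1)) * D :=
    Finset.sum_le_sum (fun j hj => key j (Finset.mem_range.mp hj))
  -- LHS equals 4 * Σ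
  have hrefl : ∑ j ∈ range s, 2 ^ (j + 1) * b (s - 1 - j)
      = ∑ j ∈ range s, 2 ^ (s - j) * b j := by
    rw [← Finset.sum_range_reflect (fun j => 2 ^ (s - j) * b j) s]
    apply Finset.sum_congr rfl
    intro j hj
    rw [Finset.mem_range] at hj
    have : s - (s - 1 - j) = j + 1 := by omega
    rw [this]
  have hLHS : ∑ j ∈ range s, (2 * (2 ^ (s - j) * b j) + 2 * (2 ^ (j + 1) * b (s - 1 - j)))
      = 4 * ∑ j ∈ range s, 2 ^ (s - j) * b j := by
    rw [Finset.sum_add_distrib, ← Finset.mul_sum, ← Finset.mul_sum, hrefl]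
    ring
  have hRHS : ∑ j ∈ range s, (2 ^ (s - j) + 2 ^ (j + 1)) * D
      = 4 * ((2 ^ s - 1) * D) := by
    rw [← Finset.sum_mul]
    have h1 : ∑ j ∈ range s, (2 ^ (s - j) + 2 ^ (j + 1))
        = (2 ^ (s+1) - 2) + (2 ^ (s+1) - 2) := by
      rw [Finset.sum_add_distrib, geom_two']
      congr 1
      have h2j : ∀ j ∈ range s, (2:ℕ) ^ (j + 1) = 2 * 2 ^ j := fun j _ => by ring
      rw [Finset.sum_congr rfl h2j, ← Finset.mul_sum, geom_two]
      have : 1 ≤ (2:ℕ) ^ s := Nat.one_le_two_pow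
      have : (2:ℕ) ^ (s+1) = 2 * 2 ^ s := by ring
      omega
    rw [h1]
    have h2 : 2 ≤ 2 ^ (s + 1) := by
      calc (2:ℕ) = 2 ^ 1 := rfl
        _ ≤ 2 ^ (s+1) := Nat.pow_le_pow_right (by norm_num) (by omega)
    have h3 : (2:ℕ) ^ (s+1) = 2 * 2 ^ s := by ring
    have h4 : 1 ≤ 2 ^ s := Nat.one_le_two_pow
    have : (2 ^ (s+1) - 2) + (2 ^ (s+1) - 2) = 4 * (2 ^ s - 1) := by omega
    rw [this, Nat.mul_assoc]
  rw [hLHS, hRHS] at hsum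
  exact Nat.le_of_mul_le_mul_left hsum (by norm_num)

/-- per-element inequality -/
lemma per_elem (s j : ℕ) :
    2 ^ (s + 1) ≤ 2 * 2 ^ j + ∑ i ∈ range s, (if j ≤ i then 2 ^ (s - i) * 2 ^ j else 0) := by
  rcases le_or_gt s j with hc | hc
  · have : 2 ^ (s+1) ≤ 2 * 2 ^ j := by
      have : (2:ℕ) ^ (s+1) = 2 * 2 ^ s := by ring
      have := Nat.pow_le_pow_right (show 0 < 2 by norm_num) hc
      omega
    omega
  · have hfil : ∑ i ∈ range s, (if j ≤ i then 2 ^ (s - i) * 2 ^ j else 0)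
        = ∑ i ∈ Finset.Ico j s, 2 ^ (s - i) * 2 ^ j := by
      rw [Finset.sum_ite, Finset.sum_const_zero, add_zero]
      apply Finset.sum_congr _ (fun _ _ => rfl)
      ext i
      simp only [Finset.mem_filter, Finset.mem_range, Finset.mem_Ico]
      omega
    rw [hfil, Finset.sum_Ico_eq_sum_range]
    have : ∀ t ∈ range (s - j), 2 ^ (s - (j + t)) * 2 ^ j = 2 ^ (s - j - t) * 2 ^ j := by
      intro t ht
      congr 2
      omega
    rw [Finset.sum_congr rfl this, ← Finset.sum_mul, geom_two']
    have h1 : (2:ℕ) ^ (s - j + 1) * 2 ^ j = 2 * 2 ^ s := by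
      rw [← pow_add, ← pow_succ']
      congr 1
      omega
    have h2 : (2:ℕ) ^ j ≤ 2 ^ s := Nat.pow_le_pow_right (by norm_num) (le_of_lt hc)
    have h3 : (2:ℕ) ^ (s+1) = 2 * 2 ^ s := by ring
    have h4 : (2 ^ (s - j + 1) - 2) * 2 ^ j = 2 ^ (s - j + 1) * 2 ^ j - 2 * 2 ^ j := by
      rw [Nat.sub_mul]
    omega

/-- THE UPPER BOUND: 2^(s+1) * |F| ≤ (2^s + 1) * 2^d -/
theorem upper_bound (hs : 1 ≤ s) (hsd : s ≤ d) {F : Finset (JString d)} (hF : Valid s d F) :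
    2 ^ (s + 1) * #F ≤ (2 ^ s + 1) * 2 ^ d := by
  classical
  set B : ℕ → ℕ := fun j => ∑ u ∈ F.filter (fun u => jk u ≤ j), 2 ^ jk u with hB
  have hmono : Monotone B := by
    intro a b hab
    apply Finset.sum_le_sum_of_subset
    intro u hu
    simp only [Finset.mem_filter] at hu ⊢
    exact ⟨hu.1, le_trans hu.2 hab⟩
  have hbD : ∀ j, j < s → B j + B (s - 1 - j) ≤ 2 ^ d := by
    intro j hj
    have h := ineqB (ℓ := j) hF hsd hj
    have e1 : B j = ∑ u ∈ F.filter (fun u => jk u ≤ j), 2 ^ jk u := rfl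
    have e2 : B (s - 1 - j) = ∑ u ∈ F.filter (fun u => jk u ≤ s - 1 - j), 2 ^ jk u := rfl
    omega
  have step1 : 2 ^ (s + 1) * #F ≤ 2 * (∑ u ∈ F, 2 ^ jk u) + ∑ j ∈ range s, 2 ^ (s - j) * B j := by
    calc 2 ^ (s + 1) * #F = ∑ u ∈ F, 2 ^ (s+1) := by rw [Finset.sum_const, Nat.mul_comm, smul_eq_mul]
      _ ≤ ∑ u ∈ F, (2 * 2 ^ jk u + ∑ i ∈ range s, (if jk u ≤ i then 2 ^ (s - i) * 2 ^ jk u else 0)) :=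
          Finset.sum_le_sum (fun u _ => per_elem s (jk u))
      _ = 2 * (∑ u ∈ F, 2 ^ jk u) + ∑ j ∈ range s, 2 ^ (s - j) * B j := by
          rw [Finset.sum_add_distrib, ← Finset.mul_sum]
          congr 1
          rw [Finset.sum_comm]
          apply Finset.sum_congr rfl
          intro i _
          rw [hB, Finset.mul_sum, Finset.sum_filter]
  have step2 : ∑ j ∈ range s, 2 ^ (s - j) * B j ≤ (2 ^ s - 1) * 2 ^ d :=
    pair_sum s B hmono hbD
  have step3 : ∑ u ∈ F, 2 ^ jk u ≤ 2 ^ d := ineqA hF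
  have h4 : 1 ≤ 2 ^ s := Nat.one_le_two_pow
  calc 2 ^ (s + 1) * #F ≤ 2 * (∑ u ∈ F, 2 ^ jk u) + ∑ j ∈ range s, 2 ^ (s - j) * B j := step1
    _ ≤ 2 * 2 ^ d + (2 ^ s - 1) * 2 ^ d := by
        have := Nat.mul_le_mul_left 2 step3
        omega
    _ = (2 ^ s + 1) * 2 ^ d := by
        rw [← Nat.add_mul]
        exact congrArg (fun t => t * 2 ^ d) (by omega)

end NeighborlyAux

namespace NeighborlyAux
open Finset

/-- weight of a boolean vector -/
def wt {n : ℕ} (x : Fin n → Bool) : ℕ := #(univ.filter fun i => x i = true)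

lemma wt_layer_card (n i : ℕ) :
    #((univ : Finset (Fin n → Bool)).filter fun x => wt x = i) = n.choose i := by
  classical
  have hrw : n.choose i = #(Finset.powersetCard i (univ : Finset (Fin n))) := by
    rw [Finset.card_powersetCard, Finset.card_univ, Fintype.card_fin]
  rw [hrw]
  refine Finset.card_bij' (fun x _ => univ.filter fun j => x j = true)
    (fun A _ => fun j => decide (j ∈ A)) ?hi ?hj ?li ?ri
  case hi =>
    intro x hx
    simp only [mem_filter, mem_univ, true_and] at hx
    rw [Finset.mem_powersetCard]
    exact ⟨Finset.subset_univ _, hx⟩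
  case hj =>
    intro A hA
    rw [Finset.mem_powersetCard] at hA
    simp only [mem_filter, mem_univ, true_and]
    have : wt (fun j => decide (j ∈ A)) = #(univ.filter fun j => decide (j ∈ A) = true) := rfl
    rw [this, ← hA.2]
    congr 1
    ext j
    simp
  case li =>
    intro x hx
    funext j
    simp only [mem_filter, mem_univ, true_and]
    cases h : x j <;> simp [h]
  case ri =>
    intro A hA
    ext j
    simp

lemma wt_not {n : ℕ} (x : Fin n → Bool) : wt (fun i => !(x i)) = n - wt x := by
  have h := Finset.card_filter_add_card_filter_not (s := (univ : Finset (Fin n)))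
    (fun i => x i = true)
  have h2 : #(univ.filter fun i => ¬ x i = true) = #(univ.filter fun i => (!(x i)) = true) := by
    congr 1
    apply Finset.filter_congr
    intro j _
    cases h : x j <;> simp [h]
  rw [Finset.card_univ, Fintype.card_fin] at h
  have h3 : wt (fun i => !(x i)) = #(univ.filter fun i => (!(x i)) = true) := rfl
  rw [h3, ← h2]
  unfold wt
  omega

lemma wt_le {n : ℕ} (x : Fin n → Bool) : wt x ≤ n := by
  calc wt x ≤ #(univ : Finset (Fin n)) := Finset.card_le_card (Finset.filter_subset _ _)
    _ = n := by simp

lemma card_bool_fun (n : ℕ) : #((univ : Finset (Fin n → Bool))) = 2 ^ n := by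
  rw [Finset.card_univ, Fintype.card_fun]
  simp

/-- lower half bound -/
lemma half_low (n : ℕ) (hn : 1 ≤ n) :
    2 ^ (n - 1) ≤ #((univ : Finset (Fin n → Bool)).filter fun x => wt x ≤ n / 2) := by
  classical
  set A := (univ : Finset (Fin n → Bool)).filter fun x => wt x ≤ n / 2 with hA
  set B := (univ : Finset (Fin n → Bool)).filter fun x => ¬ (wt x ≤ n / 2) with hB
  have hsum : #A + #B = 2 ^ n := by
    rw [hA, hB, Finset.card_filter_add_card_filter_not, card_bool_fun]
  have hBA : #B ≤ #A := by
    apply Finset.card_le_card_of_injOn (fun x => fun i => !(x i))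
    · intro x hx
      simp only [Finset.mem_coe, hB, mem_filter, mem_univ, true_and, not_le] at hx
      simp only [Finset.mem_coe, hA, mem_filter, mem_univ, true_and]
      rw [wt_not]
      omega
    · intro x _ y _ hxy
      funext i
      have := congrFun hxy i
      simpa using this
  have hp : 2 ^ n = 2 * 2 ^ (n - 1) := by
    rw [← pow_succ']
    congr 1
    omega
  omega

/-- upper half bound -/
lemma half_high (n : ℕ) (hn : 1 ≤ n) :
    #((univ : Finset (Fin n → Bool)).filter fun x => wt x ≤ n / 2)
      ≤ 2 ^ (n - 1) + n.choose (n / 2) := by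
  classical
  set A := (univ : Finset (Fin n → Bool)).filter fun x => wt x ≤ n / 2 with hA
  set B := (univ : Finset (Fin n → Bool)).filter fun x => ¬ (wt x ≤ n / 2) with hB
  have hsum : #A + #B = 2 ^ n := by
    rw [hA, hB, Finset.card_filter_add_card_filter_not, card_bool_fun]
  have hAB : #A ≤ #B + n.choose (n / 2) := by
    rw [← wt_layer_card n (n / 2)]
    rw [← Finset.card_union_of_disjoint (by
      rw [Finset.disjoint_left]
      intro x hx hx'
      simp only [hB, mem_filter, mem_univ, true_and, not_le] at hx
      simp only [mem_filter, mem_univ, true_and] at hx'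
      omega)]
    apply Finset.card_le_card_of_injOn (fun x => fun i => !(x i))
    · intro x hx
      simp only [Finset.mem_coe, hA, mem_filter, mem_univ, true_and] at hx
      have hle := wt_le x
      rw [Finset.mem_coe, Finset.mem_union]
      simp only [hB, mem_filter, mem_univ, true_and, not_le]
      rw [wt_not]
      omega
    · intro x _ y _ hxy
      funext i
      have := congrFun hxy i
      simpa using this
  have hp : 2 ^ n = 2 * 2 ^ (n - 1) := by
    rw [← pow_succ']
    congr 1
    omega
  omega

/-- band bound: going from n/2 down to r costs at most (n/2 - r) middle binomials -/
lemma band (n r : ℕ) (hr : r ≤ n / 2) :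
    #((univ : Finset (Fin n → Bool)).filter fun x => wt x ≤ n / 2)
      ≤ #((univ : Finset (Fin n → Bool)).filter fun x => wt x ≤ r)
        + (n / 2 - r) * n.choose (n / 2) := by
  classical
  have hsub : ((univ : Finset (Fin n → Bool)).filter fun x => wt x ≤ n / 2)
      ⊆ ((univ : Finset (Fin n → Bool)).filter fun x => wt x ≤ r)
        ∪ (Finset.Icc (r+1) (n/2)).biUnion
            (fun i => (univ : Finset (Fin n → Bool)).filter fun x => wt x = i) := by
    intro x hx
    simp only [mem_filter, mem_univ, true_and] at hx
    rw [Finset.mem_union, Finset.mem_biUnion]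
    rcases le_or_gt (wt x) r with h | h
    · left; simp [h]
    · right
      exact ⟨wt x, by rw [Finset.mem_Icc]; omega, by simp⟩
  calc #((univ : Finset (Fin n → Bool)).filter fun x => wt x ≤ n / 2)
      ≤ #(((univ : Finset (Fin n → Bool)).filter fun x => wt x ≤ r)
        ∪ (Finset.Icc (r+1) (n/2)).biUnion
            (fun i => (univ : Finset (Fin n → Bool)).filter fun x => wt x = i)) :=
        Finset.card_le_card hsub
    _ ≤ #((univ : Finset (Fin n → Bool)).filter fun x => wt x ≤ r)
        + #((Finset.Icc (r+1) (n/2)).biUnion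
            (fun i => (univ : Finset (Fin n → Bool)).filter fun x => wt x = i)) :=
        Finset.card_union_le _ _
    _ ≤ #((univ : Finset (Fin n → Bool)).filter fun x => wt x ≤ r)
        + (n / 2 - r) * n.choose (n / 2) := by
        refine Nat.add_le_add_left ?_ _
        refine le_trans Finset.card_biUnion_le ?_
        calc ∑ i ∈ Finset.Icc (r+1) (n/2),
              #((univ : Finset (Fin n → Bool)).filter fun x => wt x = i)
            = ∑ i ∈ Finset.Icc (r+1) (n/2), n.choose i := by
              exact Finset.sum_congr rfl (fun i _ => wt_layer_card n i)
          _ ≤ #(Finset.Icc (r+1) (n/2)) • n.choose (n / 2) :=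
              Finset.sum_le_card_nsmul _ _ _ (fun i _ => Nat.choose_le_middle i n)
          _ = (n / 2 - r) * n.choose (n / 2) := by
              rw [Nat.card_Icc, smul_eq_mul]
              congr 1
              omega

/-- count of vectors of weight > n/2 -/
lemma high_count (n : ℕ) (hn : 1 ≤ n) :
    2 ^ (n - 1) ≤ #((univ : Finset (Fin n → Bool)).filter fun x => n / 2 < wt x)
      + n.choose (n / 2) := by
  classical
  have h1 := half_high n hn
  have hsum : #((univ : Finset (Fin n → Bool)).filter fun x => wt x ≤ n / 2)
      + #((univ : Finset (Fin n → Bool)).filter fun x => ¬ (wt x ≤ n / 2)) = 2 ^ n := by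
    rw [Finset.card_filter_add_card_filter_not, card_bool_fun]
  have h2 : #((univ : Finset (Fin n → Bool)).filter fun x => ¬ (wt x ≤ n / 2))
      = #((univ : Finset (Fin n → Bool)).filter fun x => n / 2 < wt x) := by
    congr 1
    apply Finset.filter_congr
    intro x _
    omega
  have hp : 2 ^ n = 2 * 2 ^ (n - 1) := by
    rw [← pow_succ']
    congr 1
    omega
  omega

/-- count of low-weight vectors, down-shifted threshold -/
lemma low_count (n r s : ℕ) (hn : 1 ≤ n) (hr : r ≤ n / 2) (hs : n / 2 - r ≤ s) :
    2 ^ (n - 1) ≤ #((univ : Finset (Fin n → Bool)).filter fun x => wt x ≤ r)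
      + s * n.choose (n / 2) := by
  have h1 := half_low n hn
  have h2 := band n r hr
  have h3 : (n / 2 - r) * n.choose (n / 2) ≤ s * n.choose (n / 2) :=
    Nat.mul_le_mul_right _ hs
  omega

end NeighborlyAux

namespace NeighborlyAux
open Finset

lemma cb1 : ∀ m : ℕ, (2 * m + 1) * Nat.centralBinom m ^ 2 ≤ 16 ^ m := by
  intro m
  induction m with
  | zero => simp [Nat.centralBinom]
  | succ m ih =>
    have h := Nat.succ_mul_centralBinom_succ m
    have key : (m + 1) ^ 2 * ((2 * (m + 1) + 1) * Nat.centralBinom (m + 1) ^ 2)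
        ≤ (m + 1) ^ 2 * 16 ^ (m + 1) := by
      have e1 : (m + 1) ^ 2 * ((2 * (m + 1) + 1) * Nat.centralBinom (m + 1) ^ 2)
          = (2 * m + 3) * ((m + 1) * Nat.centralBinom (m + 1)) ^ 2 := by ring
      rw [e1, h]
      have e2 : (2 * m + 3) * (2 * (2 * m + 1) * Nat.centralBinom m) ^ 2
          = (4 * (2 * m + 3) * (2 * m + 1)) * ((2 * m + 1) * Nat.centralBinom m ^ 2) := by ring
      rw [e2]
      calc (4 * (2 * m + 3) * (2 * m + 1)) * ((2 * m + 1) * Nat.centralBinom m ^ 2)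
          ≤ (4 * (2 * m + 3) * (2 * m + 1)) * 16 ^ m := Nat.mul_le_mul_left _ ih
        _ ≤ (16 * (m + 1) ^ 2) * 16 ^ m := by
            apply Nat.mul_le_mul_right
            nlinarith
        _ = (m + 1) ^ 2 * 16 ^ (m + 1) := by ring
    exact Nat.le_of_mul_le_mul_left key (by positivity)

lemma cb2 (n : ℕ) : n * (n.choose (n / 2)) ^ 2 ≤ 4 ^ n := by
  rcases Nat.even_or_odd n with ⟨m, hm⟩ | ⟨m, hm⟩
  · subst hm
    have h1 : m + m = 2 * m := by ring
    rw [h1]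
    have h2 : (2 * m) / 2 = m := by omega
    rw [h2]
    have h3 : (2 * m).choose m = Nat.centralBinom m := rfl
    rw [h3]
    calc 2 * m * Nat.centralBinom m ^ 2 ≤ (2 * m + 1) * Nat.centralBinom m ^ 2 :=
          Nat.mul_le_mul_right _ (by omega)
      _ ≤ 16 ^ m := cb1 m
      _ = 4 ^ (2 * m) := by rw [pow_mul]; norm_num
  · subst hm
    have h2 : (2 * m + 1) / 2 = m := by omega
    rw [h2]
    rcases Nat.eq_zero_or_pos m with rfl | hm0
    · simp
    · have hchoose : (2 * m + 1).choose m ≤ 2 * Nat.centralBinom m := by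
        obtain ⟨k, rfl⟩ : ∃ k, m = k + 1 := ⟨m - 1, by omega⟩
        have := Nat.choose_succ_succ' (2 * (k + 1)) k
        have hle1 : (2 * (k + 1)).choose k ≤ (2 * (k + 1)).choose ((2 * (k + 1)) / 2) :=
          Nat.choose_le_middle _ _
        have hle2 : (2 * (k + 1)).choose (k + 1) ≤ (2 * (k + 1)).choose ((2 * (k + 1)) / 2) :=
          Nat.choose_le_middle _ _
        have hmid : (2 * (k + 1)) / 2 = k + 1 := by omega
        rw [hmid] at hle1 hle2
        have hcb : (2 * (k + 1)).choose (k + 1) = Nat.centralBinom (k + 1) := rfl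
        rw [hcb] at hle1 hle2
        calc (2 * (k + 1) + 1).choose (k + 1)
            = (2 * (k + 1)).choose k + (2 * (k + 1)).choose (k + 1) := this
          _ ≤ 2 * Nat.centralBinom (k + 1) := by omega
      calc (2 * m + 1) * ((2 * m + 1).choose m) ^ 2
          ≤ (2 * m + 1) * (2 * Nat.centralBinom m) ^ 2 := by
            apply Nat.mul_le_mul_left
            exact Nat.pow_le_pow_left hchoose 2
        _ = 4 * ((2 * m + 1) * Nat.centralBinom m ^ 2) := by ring
        _ ≤ 4 * 16 ^ m := Nat.mul_le_mul_left _ (cb1 m)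
        _ = 4 ^ (2 * m + 1) := by rw [pow_succ, pow_mul]; ring_nf
    
/-- the central binomial ratio tends to 0 -/
lemma cb_tendsto : Filter.Tendsto (fun n : ℕ => (n.choose (n / 2) : ℝ) / 2 ^ n)
    Filter.atTop (nhds 0) := by
  set e : ℕ → ℝ := fun n => (n.choose (n / 2) : ℝ) / 2 ^ n with he
  have he_nonneg : ∀ n, 0 ≤ e n := fun n => by positivity
  have hsq : ∀ n : ℕ, 1 ≤ n → (e n) ^ 2 ≤ 1 / n := by
    intro n hn
    have h := cb2 n
    have hcast : (n : ℝ) * ((n.choose (n / 2) : ℝ)) ^ 2 ≤ 4 ^ n := by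
      exact_mod_cast (Nat.cast_le (α := ℝ)).mpr h
    rw [he]
    have h2 : ((2:ℝ) ^ n) ^ 2 = 4 ^ n := by
      rw [← pow_mul, mul_comm, pow_mul]
      norm_num
    rw [div_pow, h2, div_le_div_iff₀ (by positivity) (by positivity)]
    calc (n.choose (n / 2) : ℝ) ^ 2 * (n : ℝ) = (n : ℝ) * (n.choose (n / 2) : ℝ) ^ 2 := by ring
      _ ≤ 4 ^ n := hcast
      _ = 1 * 4 ^ n := by ring
  -- squeeze e^2 → 0, then e = sqrt (e^2)
  have hsq_tendsto : Filter.Tendsto (fun n => (e n) ^ 2) Filter.atTop (nhds 0) := by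
    apply tendsto_of_tendsto_of_tendsto_of_le_of_le' (g := fun _ : ℕ => (0:ℝ))
      (h := fun n : ℕ => 1 / (n:ℝ))
    · exact tendsto_const_nhds
    · exact tendsto_one_div_atTop_nhds_zero_nat
    · exact Filter.Eventually.of_forall (fun n => by positivity)
    · filter_upwards [Filter.eventually_ge_atTop 1] with n hn
      exact hsq n hn
  have : Filter.Tendsto (fun n => Real.sqrt ((e n) ^ 2)) Filter.atTop (nhds 0) := by
    have hcont : Filter.Tendsto Real.sqrt (nhds 0) (nhds 0) := by
      have := (Real.continuous_sqrt.tendsto 0)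
      simpa using this
    exact hcont.comp hsq_tendsto
  apply this.congr
  intro n
  exact Real.sqrt_sq (he_nonneg n)

end NeighborlyAux

namespace NeighborlyAux
open Finset

variable {d s : ℕ}

lemma jDist_comm (u v : JString d) : jDist u v = jDist v u := by
  unfold jDist
  congr 1
  apply Finset.filter_congr
  intro i _
  constructor
  · rintro ⟨a, b, ha, hb, hab⟩; exact ⟨b, a, hb, ha, fun h => hab h.symm⟩
  · rintro ⟨a, b, ha, hb, hab⟩; exact ⟨b, a, hb, ha, fun h => hab h.symm⟩

/-- embedding of binary strings -/
def embS (x : Fin d → Bool) : JString d := fun i => some (x i)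

/-- strings with jokers in the first `s` positions, binary elsewhere -/
def jokS (s : ℕ) (w : Fin (d - s) → Bool) : JString d :=
  fun i => if h : (i : ℕ) < s then none
    else some (w ⟨(i : ℕ) - s, by have := i.isLt; omega⟩)

lemma embS_inj : Function.Injective (embS (d := d)) := by
  intro x y h
  funext i
  have := congrFun h i
  simpa [embS] using this

lemma jokS_val {w : Fin (d - s) → Bool} {i : Fin d} (h : ¬ ((i : ℕ) < s)) :
    jokS s w i = some (w ⟨(i : ℕ) - s, by have := i.isLt; omega⟩) := by
  simp [jokS, h]

lemma jokS_at (w : Fin (d - s) → Bool) (k : Fin (d - s)) (hsd : s ≤ d) :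
    jokS s w ⟨(k : ℕ) + s, by have := k.isLt; omega⟩ = some (w k) := by
  rw [jokS_val (show ¬ ((k : ℕ) + s < s) by omega)]
  congr 1
  apply congrArg
  apply Fin.ext
  simp

lemma jokS_inj (hsd : s ≤ d) : Function.Injective (jokS (d := d) s) := by
  intro w w' h
  funext k
  have := congrFun h ⟨(k : ℕ) + s, by have := k.isLt; omega⟩
  rw [jokS_at w k hsd, jokS_at w' k hsd] at this
  exact Option.some_injective _ this

lemma jDist_emb_emb (x y : Fin d → Bool) :
    jDist (embS x) (embS y) = #(univ.filter fun i => ¬ x i = y i) := by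
  unfold jDist
  congr 1
  apply Finset.filter_congr
  intro i _
  simp only [embS, Option.some.injEq]
  constructor
  · rintro ⟨a, b, rfl, rfl, hab⟩; exact hab
  · intro h; exact ⟨x i, y i, rfl, rfl, h⟩

lemma jDist_emb_emb_le (x y : Fin d → Bool) :
    jDist (embS x) (embS y) ≤ wt x + wt y := by
  rw [jDist_emb_emb]
  calc #(univ.filter fun i => ¬ x i = y i)
      ≤ #((univ.filter fun i => x i = true) ∪ (univ.filter fun i => y i = true)) := by
        apply Finset.card_le_card
        intro i hi
        simp only [mem_filter, mem_univ, true_and] at hi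
        rw [Finset.mem_union]
        simp only [mem_filter, mem_univ, true_and]
        cases hx : x i <;> cases hy : y i <;> simp_all
    _ ≤ wt x + wt y := Finset.card_union_le _ _

lemma jDist_emb_emb_pos {x y : Fin d → Bool} (h : x ≠ y) :
    1 ≤ jDist (embS x) (embS y) := by
  rw [jDist_emb_emb]
  rw [Nat.succ_le_iff, Finset.card_pos]
  rcases Function.ne_iff.mp h with ⟨i, hi⟩
  exact ⟨i, by simp [hi]⟩

lemma card_high_coords (hsd : s < d) :
    #(univ.filter fun i : Fin d => ¬ ((i : ℕ) < s)) = d - s := by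
  have h : (univ.filter fun i : Fin d => ¬ ((i : ℕ) < s)) = Finset.Ici (⟨s, hsd⟩ : Fin d) := by
    ext i
    simp only [mem_filter, mem_univ, true_and, Finset.mem_Ici, Fin.le_def]
    change _ ↔ s ≤ (i : ℕ)
    omega
  rw [h, Fin.card_Ici]

lemma jDist_le_jok (hsd : s < d) (u : JString d) (w : Fin (d - s) → Bool) :
    jDist u (jokS s w) ≤ d - s := by
  rw [← card_high_coords hsd]
  apply Finset.card_le_card
  intro i hi
  simp only [mem_filter, mem_univ, true_and] at hi ⊢
  rcases hi with ⟨a, b, _, hb, _⟩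
  intro hlt
  rw [jokS, dif_pos hlt] at hb
  cases hb

lemma jDist_emb_jok_pos (hsd : s ≤ d) {x : Fin d → Bool} {w : Fin (d - s) → Bool}
    {r : ℕ} (hx : wt x ≤ r) (hw : r < wt w) :
    1 ≤ jDist (embS x) (jokS s w) := by
  by_contra hc
  push_neg at hc
  interval_cases h : jDist (embS x) (jokS s w)
  rw [jDist] at h
  have hempty := Finset.card_eq_zero.mp h
  have hagree : ∀ k : Fin (d - s), x ⟨(k : ℕ) + s, by have := k.isLt; omega⟩ = w k := by
    intro k
    by_contra hne
    have hmem : (⟨(k : ℕ) + s, by have := k.isLt; omega⟩ : Fin d) ∈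
        (Finset.univ.filter fun i => ∃ a b : Bool,
          embS x i = some a ∧ jokS s w i = some b ∧ a ≠ b) := by
      simp only [mem_filter, mem_univ, true_and]
      exact ⟨x _, w k, rfl, jokS_at w k hsd, hne⟩
    rw [hempty] at hmem
    exact absurd hmem (Finset.notMem_empty _)
  -- then wt w ≤ wt x
  have hle : wt w ≤ wt x := by
    unfold wt
    apply Finset.card_le_card_of_injOn
      (fun (k : Fin (d - s)) => (⟨(k : ℕ) + s, by have := k.isLt; omega⟩ : Fin d))
    · intro k hk
      simp only [Finset.mem_coe, mem_filter, mem_univ, true_and] at hk ⊢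
      rw [hagree k]
      exact hk
    · intro a _ b _ hab
      have : (a : ℕ) + s = (b : ℕ) + s := congrArg Fin.val hab
      exact Fin.ext (by omega)
  omega

lemma jDist_jok_jok_pos (hsd : s ≤ d) {w w' : Fin (d - s) → Bool} (h : w ≠ w') :
    1 ≤ jDist (jokS s w) (jokS s w') := by
  rcases Function.ne_iff.mp h with ⟨k, hk⟩
  rw [Nat.succ_le_iff, jDist, Finset.card_pos]
  refine ⟨⟨(k : ℕ) + s, by have := k.isLt; omega⟩, ?_⟩
  simp only [mem_filter, mem_univ, true_and]
  exact ⟨w k, w' k, jokS_at w k hsd, jokS_at w' k hsd, hk⟩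

/-- the lower-bound family -/
lemma lower_card (hs : 1 ≤ s) (hd : 2 * s + 2 ≤ d) :
    ∃ F : Finset (JString d), Valid s d F ∧
      2 ^ (d - 1) + 2 ^ (d - s - 1)
        ≤ #F + s * d.choose (d / 2) + (d - s).choose ((d - s) / 2) := by
  classical
  have hsd : s < d := by omega
  set E := ((univ : Finset (Fin d → Bool)).filter fun x => wt x ≤ (d - s) / 2).image embS with hE
  set J := ((univ : Finset (Fin (d - s) → Bool)).filter fun w => (d - s) / 2 < wt w).image (jokS s) with hJ
  refine ⟨E ∪ J, ?_, ?_⟩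
  · -- validity
    intro u hu v hv huv
    rw [Finset.mem_union] at hu hv
    have getE : ∀ {z}, z ∈ E → ∃ x, wt x ≤ (d - s) / 2 ∧ z = embS x := by
      intro z hz
      rw [hE, Finset.mem_image] at hz
      rcases hz with ⟨x, hx, rfl⟩
      simp only [mem_filter, mem_univ, true_and] at hx
      exact ⟨x, hx, rfl⟩
    have getJ : ∀ {z}, z ∈ J → ∃ w, (d - s) / 2 < wt w ∧ z = jokS s w := by
      intro z hz
      rw [hJ, Finset.mem_image] at hz
      rcases hz with ⟨w, hw, rfl⟩
      simp only [mem_filter, mem_univ, true_and] at hw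
      exact ⟨w, hw, rfl⟩
    rcases hu with hu | hu <;> rcases hv with hv | hv
    · rcases getE hu with ⟨x, hx, rfl⟩
      rcases getE hv with ⟨y, hy, rfl⟩
      have hxy : x ≠ y := fun h => huv (by rw [h])
      refine ⟨jDist_emb_emb_pos hxy, ?_⟩
      calc jDist (embS x) (embS y) ≤ wt x + wt y := jDist_emb_emb_le x y
        _ ≤ d - s := by omega
    · rcases getE hu with ⟨x, hx, rfl⟩
      rcases getJ hv with ⟨w, hw, rfl⟩
      exact ⟨jDist_emb_jok_pos (le_of_lt hsd) hx hw, jDist_le_jok hsd _ w⟩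
    · rcases getJ hu with ⟨w, hw, rfl⟩
      rcases getE hv with ⟨x, hx, rfl⟩
      rw [jDist_comm]
      exact ⟨jDist_emb_jok_pos (le_of_lt hsd) hx hw, jDist_le_jok hsd _ w⟩
    · rcases getJ hu with ⟨w, hw, rfl⟩
      rcases getJ hv with ⟨w', hw', rfl⟩
      have hww : w ≠ w' := fun h => huv (by rw [h])
      exact ⟨jDist_jok_jok_pos (le_of_lt hsd) hww, jDist_le_jok hsd _ w'⟩
  · -- cardinality
    have hdisj : Disjoint E J := by
      rw [Finset.disjoint_left]
      intro z hz hz'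
      rw [hE, Finset.mem_image] at hz
      rw [hJ, Finset.mem_image] at hz'
      rcases hz with ⟨x, _, rfl⟩
      rcases hz' with ⟨w, _, hw⟩
      have := congrFun hw ⟨0, by omega⟩
      rw [jokS, dif_pos (by simp; omega)] at this
      simp [embS] at this
    have hcard : #(E ∪ J) = #E + #J := Finset.card_union_of_disjoint hdisj
    have hEcard : #E = #((univ : Finset (Fin d → Bool)).filter fun x => wt x ≤ (d - s) / 2) :=
      Finset.card_image_of_injective _ embS_inj
    have hJcard : #J = #((univ : Finset (Fin (d - s) → Bool)).filter fun w => (d - s) / 2 < wt w) :=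
      Finset.card_image_of_injective _ (jokS_inj (le_of_lt hsd))
    have hX : 2 ^ (d - 1) ≤ #((univ : Finset (Fin d → Bool)).filter fun x => wt x ≤ (d - s) / 2)
        + s * d.choose (d / 2) := by
      apply low_count d ((d - s) / 2) s (by omega) (by omega) (by omega)
    have hY : 2 ^ (d - s - 1)
        ≤ #((univ : Finset (Fin (d - s) → Bool)).filter fun w => (d - s) / 2 < wt w)
          + (d - s).choose ((d - s) / 2) := by
      have := high_count (d - s) (by omega)
      have he : d - s - 1 = (d - s) - 1 := rfl
      omega
    omega

end NeighborlyAux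


namespace NeighborlyAux
open Finset Filter

def nkdSet (k d : ℕ) : Set ℕ := {m | ∃ F : Finset (JString d),
    (∀ u ∈ F, ∀ v ∈ F, u ≠ v → 1 ≤ jDist u v ∧ jDist u v ≤ k) ∧ F.card = m}

lemma nkdSet_nonempty (k d : ℕ) : (nkdSet k d).Nonempty :=
  ⟨0, ∅, by simp, by simp⟩

lemma nkdSet_bdd (k d : ℕ) : BddAbove (nkdSet k d) := by
  refine ⟨3 ^ d, ?_⟩
  rintro m ⟨F, _, rfl⟩
  calc #F ≤ Fintype.card (JString d) := Finset.card_le_univ F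
    _ = 3 ^ d := by
        rw [Fintype.card_fun]
        simp

lemma nkd_eq_sSup (k d : ℕ) : nkd k d = sSup (nkdSet k d) := rfl

lemma nkd_ge {k d : ℕ} {F : Finset (JString d)}
    (hF : ∀ u ∈ F, ∀ v ∈ F, u ≠ v → 1 ≤ jDist u v ∧ jDist u v ≤ k) :
    #F ≤ nkd k d :=
  le_csSup (nkdSet_bdd k d) ⟨F, hF, rfl⟩

lemma nkd_upper (s d : ℕ) (hs : 1 ≤ s) (hsd : s ≤ d) :
    2 ^ (s + 1) * nkd (d - s) d ≤ (2 ^ s + 1) * 2 ^ d := by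
  have hmem : nkd (d - s) d ∈ nkdSet (d - s) d :=
    Nat.sSup_mem (nkdSet_nonempty _ _) (nkdSet_bdd _ _)
  rcases hmem with ⟨F, hF, hcard⟩
  rw [← hcard]
  exact upper_bound hs hsd hF

lemma nkd_lower (s d : ℕ) (hs : 1 ≤ s) (hd : 2 * s + 2 ≤ d) :
    2 ^ (d - 1) + 2 ^ (d - s - 1)
      ≤ nkd (d - s) d + s * d.choose (d / 2) + (d - s).choose ((d - s) / 2) := by
  rcases lower_card hs hd with ⟨F, hF, hineq⟩
  have h2 := nkd_ge (k := d - s) hF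
  omega

end NeighborlyAux

theorem neighborly_limit_aux (s : ℕ) (hs : 0 < s) :
    Filter.Tendsto (fun d : ℕ => (nkd (d - s) d : ℝ) / 2 ^ d) Filter.atTop
      (nhds ((2 ^ s + 1) / 2 ^ (s + 1))) := by
  open NeighborlyAux Filter in
  set T : ℝ := (2 ^ s + 1) / 2 ^ (s + 1) with hT
  set cbR : ℕ → ℝ := fun n => (n.choose (n / 2) : ℝ) / 2 ^ n with hcbR
  have hcb : Tendsto cbR atTop (nhds 0) := cb_tendsto
  have hg : Tendsto (fun d : ℕ => T - s * cbR d - cbR (d - s)) atTop (nhds T) := by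
    have h1 : Tendsto (fun d : ℕ => (s : ℝ) * cbR d) atTop (nhds 0) := by
      simpa using hcb.const_mul (s : ℝ)
    have h2 : Tendsto (fun d : ℕ => cbR (d - s)) atTop (nhds 0) :=
      hcb.comp (tendsto_sub_atTop_nat s)
    have h3 : Tendsto (fun _ : ℕ => T) atTop (nhds T) := tendsto_const_nhds
    have h4 := (h3.sub h1).sub h2
    simpa using h4
  apply tendsto_of_tendsto_of_tendsto_of_le_of_le' hg tendsto_const_nhds
  · -- lower bound eventually
    filter_upwards [eventually_ge_atTop (2 * s + 2)] with d hd
    have hineq := nkd_lower s d hs (by omega)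
    have hpos : (0:ℝ) < 2 ^ d := by positivity
    rw [le_div_iff₀ hpos]
    have hcast : (2:ℝ) ^ (d - 1) + 2 ^ (d - s - 1)
        ≤ (nkd (d - s) d : ℝ) + s * (d.choose (d / 2) : ℝ)
          + ((d - s).choose ((d - s) / 2) : ℝ) := by
      exact_mod_cast hineq
    have e2' : (2:ℝ) ^ d = 2 ^ (s + 1) * 2 ^ (d - s - 1) := by
      rw [← pow_add]
      congr 1
      omega
    have e3 : (2:ℝ) ^ d = 2 ^ (d - s) * 2 ^ s := by
      rw [← pow_add]
      congr 1
      omega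
    have e4 : (2:ℝ) ^ s * 2 ^ (d - s - 1) = 2 ^ (d - 1) := by
      rw [← pow_add]
      congr 1
      omega
    have hTmul : T * 2 ^ d = 2 ^ (d - 1) + 2 ^ (d - s - 1) := by
      calc T * 2 ^ d = ((2 ^ s + 1) / 2 ^ (s + 1)) * (2 ^ (s + 1) * 2 ^ (d - s - 1)) := by
            rw [hT, e2']
        _ = (2 ^ s + 1) * 2 ^ (d - s - 1) := by
            field_simp
        _ = 2 ^ (d - 1) + 2 ^ (d - s - 1) := by
            rw [add_mul, one_mul, e4]
    have h5 : cbR d * 2 ^ d = (d.choose (d / 2) : ℝ) := by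
      rw [hcbR]
      exact div_mul_cancel₀ _ (ne_of_gt hpos)
    have h6 : cbR (d - s) * 2 ^ d = ((d - s).choose ((d - s) / 2) : ℝ) * 2 ^ s := by
      rw [hcbR]
      simp only
      rw [e3, ← mul_assoc, div_mul_cancel₀ _ (by positivity : ((2:ℝ) ^ (d - s)) ≠ 0)]
    have hC2 : (0:ℝ) ≤ ((d - s).choose ((d - s) / 2) : ℝ) := by positivity
    have h2s : (1:ℝ) ≤ 2 ^ s := one_le_pow₀ (by norm_num)
    calc (T - s * cbR d - cbR (d - s)) * 2 ^ d
        = T * 2 ^ d - (s : ℝ) * (cbR d * 2 ^ d) - (cbR (d - s) * 2 ^ d) := by ring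
      _ = 2 ^ (d - 1) + 2 ^ (d - s - 1) - s * (d.choose (d / 2) : ℝ)
          - ((d - s).choose ((d - s) / 2) : ℝ) * 2 ^ s := by rw [hTmul, h5, h6]
      _ ≤ (nkd (d - s) d : ℝ) := by nlinarith
  · -- upper bound eventually
    filter_upwards [eventually_ge_atTop (s + 1)] with d hd
    have hub := nkd_upper s d hs (by omega)
    have hpos : (0:ℝ) < 2 ^ d := by positivity
    have hpos2 : (0:ℝ) < 2 ^ (s + 1) := by positivity
    rw [hT, div_le_div_iff₀ hpos hpos2]
    have hcast : (2:ℝ) ^ (s + 1) * (nkd (d - s) d : ℝ) ≤ (2 ^ s + 1) * 2 ^ d := by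
      exact_mod_cast hub
    linarith


/-- For every fixed positive integer `s`,
`lim_{d → ∞} n(d-s, d) / 2^d = (2^s + 1) / 2^{s+1}`. -/
theorem neighborly_limit (s : ℕ) (hs : 0 < s) :
    Filter.Tendsto (fun d : ℕ => (nkd (d - s) d : ℝ) / 2 ^ d) Filter.atTop
      (nhds ((2 ^ s + 1) / 2 ^ (s + 1))) := by
  exact neighborly_limit_aux s hs
end

section
/- Let s and d be positive integers with s ≤ d/2. Then n(d-s, d) ≤ (1/2 + 1/2^{s+1}) · 2^d. -/
open Finset

section Aux

open scoped Classical

variable {d : ℕ}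

/-- number of joker positions -/
def jokers (u : JString d) : ℕ := (Finset.univ.filter fun i => u i = none).card

/-- `x` is a binary completion of `u` -/
def compat (x : Fin d → Bool) (u : JString d) : Prop := ∀ i, u i = none ∨ u i = some (x i)

lemma cube_card (u : JString d) :
    ((Finset.univ : Finset (Fin d → Bool)).filter fun x => compat x u).card = 2 ^ jokers u := by
  have h1 : ((Finset.univ : Finset (Fin d → Bool)).filter fun x => compat x u)
      = Fintype.piFinset (fun i => Finset.univ.filter fun a => u i = none ∨ u i = some a) := by
    ext x
    simp only [Finset.mem_filter, Finset.mem_univ, true_and]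
    simp [compat, Fintype.mem_piFinset]
  rw [h1, Fintype.card_piFinset]
  have h2 : ∀ i, ((Finset.univ.filter fun a => u i = none ∨ u i = some a)).card
      = if u i = none then 2 else 1 := by
    intro i
    cases h : u i with
    | none => simp [h]
    | some b =>
        simp only [h, reduceCtorEq, Option.some.injEq, false_or, if_false]
        rw [Finset.filter_eq]
        simp
  calc (∏ i, ((Finset.univ.filter fun a => u i = none ∨ u i = some a)).card)
      = ∏ i, (if u i = none then 2 else 1) := by
        exact Finset.prod_congr rfl fun i _ => h2 i
    _ = 2 ^ jokers u := by
        rw [Finset.prod_ite, Finset.prod_const, Finset.prod_const, one_pow, mul_one, jokers]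

lemma key_ineq (a b s : ℕ) (h : s ≤ a + b) : (1:ℝ)/2^a + 1/2^b ≤ 1 + 1/2^s := by
  have h2a : (0:ℝ) < 2^a := by positivity
  have h2b : (0:ℝ) < 2^b := by positivity
  have h2s : (0:ℝ) < 2^s := by positivity
  have ha1 : (1:ℝ)/2^a ≤ 1 := by
    rw [div_le_one h2a]; exact one_le_pow₀ (by norm_num)
  have hb1 : (1:ℝ)/2^b ≤ 1 := by
    rw [div_le_one h2b]; exact one_le_pow₀ (by norm_num)
  have hprod : (1 - (1:ℝ)/2^a) * (1 - 1/2^b) ≥ 0 :=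
    mul_nonneg (by linarith) (by linarith)
  have hmul : (1:ℝ)/2^a * (1/2^b) = 1/2^(a+b) := by
    rw [pow_add]; field_simp
  have hle : (1:ℝ)/2^(a+b) ≤ 1/2^s := by
    apply one_div_le_one_div_of_le h2s
    exact pow_le_pow_right₀ (by norm_num) h
  nlinarith [hprod]

end Aux


lemma main_bound (s d : ℕ) (hs : 0 < s) (hd : 0 < d) (hsd : 2 * s ≤ d)
    (F : Finset (JString d))
    (hF : ∀ u ∈ F, ∀ v ∈ F, u ≠ v → 1 ≤ jDist u v ∧ jDist u v ≤ d - s) :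
    (F.card : ℝ) ≤ (1 / 2 + 1 / 2 ^ (s + 1)) * 2 ^ d := by
  classical
  by_cases hJ : ∃ u ∈ F, ∀ i, u i = none
  · obtain ⟨u, hu, hall⟩ := hJ
    have hsub : ∀ v ∈ F, v = u := by
      intro v hv
      by_contra hne
      have h1 := (hF u hu v hv (Ne.symm hne)).1
      have hz : jDist u v = 0 := by
        rw [jDist, Finset.card_eq_zero, Finset.filter_eq_empty_iff]
        rintro i - ⟨a, b, ha, hb, hab⟩
        rw [hall i] at ha; cases ha
      omega
    have hcard : F.card ≤ 1 := Finset.card_le_one.2 fun a ha b hb => by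
      rw [hsub a ha, hsub b hb]
    have h2d : (2:ℝ) ≤ 2 ^ d := by
      calc (2:ℝ) = 2 ^ 1 := (pow_one 2).symm
        _ ≤ 2 ^ d := pow_le_pow_right₀ (by norm_num) hd
    have hpos : (0:ℝ) < 1 / 2 ^ (s + 1) := by positivity
    have hc1 : (F.card : ℝ) ≤ 1 := by exact_mod_cast hcard
    nlinarith
  · push_neg at hJ
    set w : JString d → ℝ := fun u => 1 / 2 ^ jokers u with hw
    set h : (Fin d → Bool) → ℝ := fun x => ∑ u ∈ F.filter (fun u => compat x u), w u with hh
    have huniq : ∀ (x : Fin d → Bool), ∀ u ∈ F, ∀ v ∈ F, compat x u → compat x v → u = v := by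
      intro x u hu v hv hcu hcv
      by_contra hne
      have h1 := (hF u hu v hv hne).1
      have hz : jDist u v = 0 := by
        rw [jDist, Finset.card_eq_zero, Finset.filter_eq_empty_iff]
        rintro i - ⟨a, b, ha, hb, hab⟩
        rcases hcu i with h' | h'
        · rw [h'] at ha; cases ha
        · rcases hcv i with h'' | h''
          · rw [h''] at hb; cases hb
          · rw [h'] at ha; rw [h''] at hb
            exact hab ((Option.some_inj.1 ha).symm.trans (Option.some_inj.1 hb))
      omega
    have hfilter : ∀ x : Fin d → Bool, F.filter (fun u => compat x u) = ∅ ∨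
        ∃ u ∈ F, compat x u ∧ F.filter (fun u => compat x u) = {u} := by
      intro x
      rcases (F.filter fun u => compat x u).eq_empty_or_nonempty with he | ⟨u, hu⟩
      · exact Or.inl he
      · right
        rw [Finset.mem_filter] at hu
        exact ⟨u, hu.1, hu.2, Finset.eq_singleton_iff_unique_mem.2 ⟨Finset.mem_filter.2 hu,
          fun v hv => by
            rw [Finset.mem_filter] at hv; exact huniq x v hv.1 u hu.1 hv.2 hu.2⟩⟩
    have hw_le : ∀ u, w u ≤ 1 := fun u => by
      rw [hw]
      simp only
      rw [div_le_one (by positivity)]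
      exact one_le_pow₀ (by norm_num)
    have hw_nn : ∀ u, 0 ≤ w u := fun u => by rw [hw]; positivity
    have hh_le : ∀ x, h x ≤ 1 := by
      intro x
      rcases hfilter x with he | ⟨u, -, -, he⟩
      · rw [hh]; simp only; rw [he, Finset.sum_empty]; norm_num
      · rw [hh]; simp only; rw [he, Finset.sum_singleton]; exact hw_le u
    have step1 : ∑ x : Fin d → Bool, h x = (F.card : ℝ) := by
      have hx : ∀ x : Fin d → Bool, h x = ∑ u ∈ F, if compat x u then w u else 0 := fun x => by
        rw [hh]; exact Finset.sum_filter _ _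
      calc ∑ x : Fin d → Bool, h x
          = ∑ x : Fin d → Bool, ∑ u ∈ F, if compat x u then w u else 0 :=
            Finset.sum_congr rfl (fun x _ => hx x)
        _ = ∑ u ∈ F, ∑ x : Fin d → Bool, if compat x u then w u else 0 := Finset.sum_comm
        _ = ∑ u ∈ F, ((2:ℝ) ^ jokers u) * w u := by
            refine Finset.sum_congr rfl fun u hu => ?_
            rw [← Finset.sum_filter, Finset.sum_const, cube_card, nsmul_eq_mul]
            push_cast
            ring
        _ = ∑ u ∈ F, 1 := by
            refine Finset.sum_congr rfl fun u hu => ?_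
            rw [hw]
            simp only
            field_simp
        _ = (F.card : ℝ) := by simp
    have step2 : ∀ x : Fin d → Bool, h x + h (fun i => !(x i)) ≤ 1 + 1 / 2 ^ s := by
      intro x
      have hp : (0:ℝ) ≤ 1 / 2 ^ s := by positivity
      rcases hfilter x with he | ⟨u, huF, hcu, heu⟩
      · have hz : h x = 0 := by rw [hh]; simp only; rw [he, Finset.sum_empty]
        have h2 := hh_le (fun i => !(x i))
        linarith
      rcases hfilter (fun i => !(x i)) with he | ⟨v, hvF, hcv, hev⟩
      · have hz : h (fun i => !(x i)) = 0 := by rw [hh]; simp only; rw [he, Finset.sum_empty]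
        have h2 := hh_le x
        linarith
      have hx : h x = w u := by rw [hh]; simp only; rw [heu, Finset.sum_singleton]
      have hxc : h (fun i => !(x i)) = w v := by rw [hh]; simp only; rw [hev, Finset.sum_singleton]
      have hne : u ≠ v := by
        rintro rfl
        obtain ⟨i, hi⟩ := hJ u huF
        rcases hcu i with h' | h'
        · exact hi h'
        · rcases hcv i with h'' | h''
          · exact hi h''
          · rw [h'] at h''
            have := Option.some_inj.1 h''
            simp at this
      have hdist := (hF u huF v hvF hne).2
      have hkey : s ≤ jokers u + jokers v := by
        have hcardT : (Finset.univ.filter fun i : Fin d => u i ≠ none ∧ v i ≠ none).card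
            ≤ jDist u v := by
          rw [jDist]
          apply Finset.card_le_card
          intro i hi
          rw [Finset.mem_filter] at hi ⊢
          refine ⟨Finset.mem_univ _, ?_⟩
          rcases hcu i with h' | h'
          · exact absurd h' hi.2.1
          · rcases hcv i with h'' | h''
            · exact absurd h'' hi.2.2
            · exact ⟨x i, !(x i), h', h'', by simp⟩
        have hsplit : (Finset.univ.filter fun i : Fin d => u i ≠ none ∧ v i ≠ none).card
            + (Finset.univ.filter fun i : Fin d => ¬(u i ≠ none ∧ v i ≠ none)).card = d := by
          rw [Finset.card_filter_add_card_filter_not]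
          simp
        have hcompl : (Finset.univ.filter fun i : Fin d => ¬(u i ≠ none ∧ v i ≠ none)).card
            ≤ jokers u + jokers v := by
          have hsub2 : (Finset.univ.filter fun i : Fin d => ¬(u i ≠ none ∧ v i ≠ none))
              ⊆ (Finset.univ.filter fun i => u i = none)
                ∪ (Finset.univ.filter fun i => v i = none) := by
            intro i hi
            rw [Finset.mem_filter] at hi
            rw [Finset.mem_union, Finset.mem_filter, Finset.mem_filter]
            rcases not_and_or.1 hi.2 with h' | h'
            · exact Or.inl ⟨Finset.mem_univ _, not_not.1 h'⟩
            · exact Or.inr ⟨Finset.mem_univ _, not_not.1 h'⟩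
          calc (Finset.univ.filter fun i : Fin d => ¬(u i ≠ none ∧ v i ≠ none)).card
              ≤ ((Finset.univ.filter fun i => u i = none)
                ∪ (Finset.univ.filter fun i => v i = none)).card := Finset.card_le_card hsub2
            _ ≤ jokers u + jokers v := Finset.card_union_le _ _
        omega
      rw [hx, hxc, hw]
      exact key_ineq _ _ _ hkey
    have hinv : Function.Involutive (fun x : Fin d → Bool => fun i => !(x i)) :=
      fun x => funext fun i => Bool.not_not (x i)
    have hre : ∑ x : Fin d → Bool, h (fun i => !(x i)) = ∑ x : Fin d → Bool, h x :=
      Fintype.sum_bijective _ hinv.bijective _ _ (fun x => rfl)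
    have hsum2 : 2 * ∑ x : Fin d → Bool, h x ≤ (2 ^ d : ℝ) * (1 + 1 / 2 ^ s) := by
      have hb : ∑ x : Fin d → Bool, (h x + h (fun i => !(x i)))
          ≤ ∑ _x : Fin d → Bool, ((1:ℝ) + 1 / 2 ^ s) :=
        Finset.sum_le_sum fun x _ => step2 x
      rw [Finset.sum_add_distrib, hre, Finset.sum_const, Finset.card_univ] at hb
      have hcard : Fintype.card (Fin d → Bool) = 2 ^ d := by simp
      rw [hcard, nsmul_eq_mul] at hb
      push_cast at hb
      linarith
    have hfin : ((1:ℝ) / 2 + 1 / 2 ^ (s + 1)) * 2 ^ d = (2 ^ d : ℝ) * (1 + 1 / 2 ^ s) / 2 := by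
      rw [pow_succ]
      field_simp
    rw [← step1, hfin]
    linarith

/-- Let `s` and `d` be positive integers with `s ≤ d/2`. Then
`n(d-s, d) ≤ (1/2 + 1/2^{s+1}) · 2^d`. -/
theorem neighborly_upper_bound (s d : ℕ) (hs : 0 < s) (hd : 0 < d) (hsd : 2 * s ≤ d) :
    (nkd (d - s) d : ℝ) ≤ (1 / 2 + 1 / 2 ^ (s + 1)) * 2 ^ d := by
  have hmem : nkd (d - s) d ∈ {m | ∃ F : Finset (JString d),
      (∀ u ∈ F, ∀ v ∈ F, u ≠ v → 1 ≤ jDist u v ∧ jDist u v ≤ d - s) ∧ F.card = m} := by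
    rw [nkd]
    exact Nat.sSup_mem ⟨0, ⟨∅, by simp, rfl⟩⟩ ⟨Fintype.card (JString d),
      fun m hm => by obtain ⟨F, -, hc⟩ := hm; exact hc ▸ F.card_le_univ⟩
  obtain ⟨F, hF, hcard⟩ := hmem
  rw [← hcard]
  exact main_bound s d hs hd hsd F hF
end

section
/- Let s and d be even positive integers with 2s ≤ d. Then n(d-s, d) ≥ (1/2 + 1/2^{s+1}) · (1 - s/√(π(d-s)/2)) · 2^d. -/
/- ### Auxiliary material -/

open Finset Real Stirling

section Stirling

lemma nal_sqrt_pi_le_stirlingSeq (n : ℕ) (hn : 1 ≤ n) : Real.sqrt Real.pi ≤ stirlingSeq n := by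
  obtain ⟨m, rfl⟩ := Nat.exists_eq_add_of_le hn
  have h := stirlingSeq'_antitone.le_of_tendsto
    (tendsto_stirlingSeq_sqrt_pi.comp (Filter.tendsto_add_atTop_nat 1)) m
  simpa [Nat.succ_eq_add_one, Nat.add_comm] using h

lemma nal_stirling_key (n : ℕ) (hn : 1 ≤ n) :
    (Nat.centralBinom n : ℝ) * Real.sqrt n * stirlingSeq n ^ 2
      = 4 ^ n * stirlingSeq (2 * n) := by
  have hx : (0:ℝ) < n := by exact_mod_cast hn
  have hE : (0:ℝ) < Real.exp 1 := Real.exp_pos 1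
  have hfac : (Nat.centralBinom n : ℝ) * (n.factorial : ℝ) * (n.factorial : ℝ)
      = ((2*n).factorial : ℝ) := by
    have := Nat.choose_mul_factorial_mul_factorial (show n ≤ 2*n by omega)
    rw [Nat.centralBinom]
    have h2 : 2*n - n = n := by omega
    rw [← this, h2]
    push_cast; ring
  have hsq : Real.sqrt (2 * (n:ℝ)) = Real.sqrt 2 * Real.sqrt n := by
    rw [Real.sqrt_mul (by norm_num)]
  have hsq2 : Real.sqrt (2 * ((2*n : ℕ):ℝ)) = 2 * Real.sqrt n := by
    push_cast
    rw [show (2:ℝ) * (2*(n:ℝ)) = 4 * n by ring, Real.sqrt_mul (by norm_num),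
      show (4:ℝ) = 2^2 by norm_num, Real.sqrt_sq (by norm_num)]
  have hpow : (((2*n:ℕ):ℝ) / Real.exp 1) ^ (2*n) = 4 ^ n * (((n:ℝ)/Real.exp 1) ^ n)^2 := by
    push_cast
    rw [show (2:ℝ) * n / Real.exp 1 = 2 * ((n:ℝ)/Real.exp 1) by ring, mul_pow,
      ← pow_mul, pow_mul 2 2 n]
    norm_num
    rw [Nat.mul_comm]
  have hne1 : Real.sqrt n ≠ 0 := by positivity
  have hne2 : Real.sqrt 2 ≠ 0 := by positivity
  have hne3 : ((n:ℝ)/Real.exp 1) ^ n ≠ 0 := by positivity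
  have hne4 : (n.factorial : ℝ) ≠ 0 := by positivity
  rw [stirlingSeq, stirlingSeq, hsq, hsq2, hpow]
  rw [div_pow]
  field_simp
  have h2 : Real.sqrt 2 ^ 2 = 2 := Real.sq_sqrt (by norm_num)
  have ha : Real.sqrt (n:ℝ) ^ 2 = (n:ℝ) := Real.sq_sqrt hx.le
  ring_nf
  simp only [ha, h2]
  rw [Nat.mul_comm n 2, ← hfac]
  ring

lemma nal_centralBinom_le (n : ℕ) (hn : 1 ≤ n) :
    (Nat.centralBinom n : ℝ) * Real.sqrt (Real.pi * n) ≤ 4 ^ n := by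
  have h1 := nal_sqrt_pi_le_stirlingSeq n hn
  have h2 : stirlingSeq (2*n) ≤ stirlingSeq n := by
    have := stirlingSeq'_antitone (show n - 1 ≤ 2*n - 1 by omega)
    simpa [Function.comp, Nat.succ_eq_add_one, Nat.sub_add_cancel hn,
      Nat.sub_add_cancel (show 1 ≤ 2*n by omega)] using this
  have hpos : 0 < stirlingSeq n := lt_of_lt_of_le (Real.sqrt_pos.mpr Real.pi_pos) h1
  have key := nal_stirling_key n hn
  have hC : (0:ℝ) ≤ (Nat.centralBinom n : ℝ) := by positivity
  have hsn : (0:ℝ) ≤ Real.sqrt n := Real.sqrt_nonneg _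
  have step : (Nat.centralBinom n : ℝ) * Real.sqrt n * (Real.sqrt Real.pi * stirlingSeq n)
      ≤ 4 ^ n * stirlingSeq n := by
    calc (Nat.centralBinom n : ℝ) * Real.sqrt n * (Real.sqrt Real.pi * stirlingSeq n)
        ≤ (Nat.centralBinom n : ℝ) * Real.sqrt n * (stirlingSeq n * stirlingSeq n) := by
          apply mul_le_mul_of_nonneg_left (by nlinarith) (by positivity)
      _ = 4 ^ n * stirlingSeq (2*n) := by rw [← key]; ring
      _ ≤ 4 ^ n * stirlingSeq n := by
          apply mul_le_mul_of_nonneg_left h2 (by positivity)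
  have := (mul_le_mul_iff_of_pos_right hpos).mp (by linarith [step] :
    (Nat.centralBinom n : ℝ) * Real.sqrt n * Real.sqrt Real.pi * stirlingSeq n
      ≤ 4 ^ n * stirlingSeq n)
  calc (Nat.centralBinom n : ℝ) * Real.sqrt (Real.pi * n)
      = (Nat.centralBinom n : ℝ) * Real.sqrt n * Real.sqrt Real.pi := by
        rw [Real.sqrt_mul Real.pi_pos.le]; ring
    _ ≤ 4 ^ n := this

end Stirling

section Counting

variable {d : ℕ}

def wt {d : ℕ} (f : Fin d → Bool) : ℕ := (Finset.univ.filter fun i => f i = true).card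

lemma nal_trues_subset {D : Finset (Fin d)} {f : Fin d → Bool}
    (hf : ∀ i ∉ D, f i = false) :
    (Finset.univ.filter fun i => f i = true) ⊆ D := by
  intro i hi
  simp only [mem_filter, mem_univ, true_and] at hi
  by_contra hiD
  exact absurd (hf i hiD) (by simp [hi])

lemma nal_wt_le_of_supp {D : Finset (Fin d)} {f : Fin d → Bool}
    (hf : ∀ i ∉ D, f i = false) :
    wt f ≤ D.card := Finset.card_le_card (nal_trues_subset hf)

lemma nal_card_level (D : Finset (Fin d)) (k : ℕ) :
    (Finset.univ.filter fun f : Fin d → Bool =>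
      (∀ i ∉ D, f i = false) ∧ wt f = k).card = D.card.choose k := by
  rw [← Finset.card_powersetCard]
  apply Finset.card_bij' (i := fun f _ => Finset.univ.filter fun i => f i = true)
    (j := fun S _ => fun i => decide (i ∈ S))
  case hi =>
    intro f hf
    simp only [mem_filter, mem_univ, true_and] at hf
    rw [Finset.mem_powersetCard]
    exact ⟨nal_trues_subset hf.1, hf.2⟩
  case hj =>
    intro S hS
    rw [Finset.mem_powersetCard] at hS
    simp only [mem_filter, mem_univ, true_and]
    constructor
    · intro i hiD
      simp only [decide_eq_false_iff_not]
      exact fun h => hiD (hS.1 h)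
    · rw [← hS.2, wt]
      congr 1
      ext i
      simp
  case left_inv =>
    intro f hf
    funext i
    simp only [mem_filter, mem_univ, true_and]
    cases h : f i <;> simp [h]
  case right_inv =>
    intro S hS
    ext i
    simp

lemma nal_card_cube (D : Finset (Fin d)) :
    (Finset.univ.filter fun f : Fin d → Bool => (∀ i ∉ D, f i = false)).card
      = 2 ^ D.card := by
  rw [Finset.card_eq_sum_card_fiberwise (f := wt) (t := Finset.range (D.card + 1))
    (by
      intro f hf
      simp only [Finset.mem_coe, mem_filter, mem_univ, true_and] at hf ⊢
      rw [Finset.mem_range, Nat.lt_succ_iff]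
      exact nal_wt_le_of_supp hf)]
  rw [← Nat.sum_range_choose D.card]
  apply Finset.sum_congr rfl
  intro k _
  rw [← nal_card_level D k, Finset.filter_filter]

lemma nal_card_nbij (D : Finset (Fin d)) (a b : ℕ) (hab : a + b = D.card) :
    (Finset.univ.filter fun f : Fin d → Bool =>
      (∀ i ∉ D, f i = false) ∧ wt f ≤ a).card
    = (Finset.univ.filter fun f : Fin d → Bool =>
      (∀ i ∉ D, f i = false) ∧ b ≤ wt f).card := by
  have key : ∀ f : Fin d → Bool, (∀ i ∉ D, f i = false) →
      wt (fun j => if j ∈ D then !f j else false) = D.card - wt f := by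
    intro f hf
    have htru : (Finset.univ.filter fun j => (if j ∈ D then !f j else false) = true)
        = D \ (Finset.univ.filter fun i => f i = true) := by
      ext j
      by_cases hj : j ∈ D <;> simp [hj]
    rw [wt, htru, Finset.card_sdiff_of_subset (nal_trues_subset hf)]
    rfl
  apply Finset.card_bij' (i := fun f _ => fun j => if j ∈ D then !f j else false)
    (j := fun f _ => fun j => if j ∈ D then !f j else false)
  case hi =>
    intro f hf
    simp only [mem_filter, mem_univ, true_and] at hf ⊢
    refine ⟨fun i hi => by simp [hi], ?_⟩
    rw [key f hf.1]
    have := nal_wt_le_of_supp hf.1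
    omega
  case hj =>
    intro f hf
    simp only [mem_filter, mem_univ, true_and] at hf ⊢
    refine ⟨fun i hi => by simp [hi], ?_⟩
    rw [key f hf.1]
    have := nal_wt_le_of_supp hf.1
    omega
  case left_inv =>
    intro f hf
    simp only [mem_filter, mem_univ, true_and] at hf
    funext j
    by_cases hj : j ∈ D
    · simp [hj]
    · simp [hj, hf.1 j hj]
  case right_inv =>
    intro f hf
    simp only [mem_filter, mem_univ, true_and] at hf
    funext j
    by_cases hj : j ∈ D
    · simp [hj]
    · simp [hj, hf.1 j hj]

lemma nal_card_mid_le (D : Finset (Fin d)) (a b : ℕ) :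
    (Finset.univ.filter fun f : Fin d → Bool =>
      (∀ i ∉ D, f i = false) ∧ (a + 1 ≤ wt f ∧ wt f ≤ b)).card
      ≤ (b - a) * D.card.choose (D.card / 2) := by
  rw [Finset.card_eq_sum_card_fiberwise (f := wt) (t := Finset.Icc (a+1) b)
    (by
      intro f hf
      simp only [Finset.mem_coe, mem_filter, mem_univ, true_and] at hf ⊢
      rw [Finset.mem_Icc]
      exact hf.2)]
  calc ∑ k ∈ Finset.Icc (a+1) b,
        ((Finset.univ.filter fun f : Fin d → Bool =>
          (∀ i ∉ D, f i = false) ∧ (a + 1 ≤ wt f ∧ wt f ≤ b)).filter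
            fun f => wt f = k).card
      ≤ ∑ k ∈ Finset.Icc (a+1) b, D.card.choose (D.card / 2) := by
        apply Finset.sum_le_sum
        intro k _
        calc ((Finset.univ.filter fun f : Fin d → Bool =>
              (∀ i ∉ D, f i = false) ∧ (a + 1 ≤ wt f ∧ wt f ≤ b)).filter
                fun f => wt f = k).card
            ≤ (Finset.univ.filter fun f : Fin d → Bool =>
              (∀ i ∉ D, f i = false) ∧ wt f = k).card := by
              apply Finset.card_le_card
              intro f hf
              simp only [mem_filter, mem_univ, true_and] at hf ⊢
              exact ⟨hf.1.1, hf.2⟩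
          _ = D.card.choose k := nal_card_level D k
          _ ≤ D.card.choose (D.card / 2) := Nat.choose_le_middle k D.card
    _ = (b - a) * D.card.choose (D.card / 2) := by
        rw [Finset.sum_const, Nat.card_Icc, smul_eq_mul]
        congr 1
        omega

lemma nal_card_tail (d s : ℕ) (hsd : s ≤ d) :
    (Finset.univ.filter fun i : Fin d => ¬ (i:ℕ) < s).card = d - s := by
  rw [show d - s = (Finset.Ico s d).card by rw [Nat.card_Ico]]
  refine Finset.card_bij' (fun a _ => (a : ℕ))
    (fun x hx => (⟨x, (Finset.mem_Ico.mp hx).2⟩ : Fin d)) ?_ ?_ ?_ ?_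
  · intro a ha
    simp only [mem_filter, mem_univ, true_and, not_lt] at ha
    exact Finset.mem_Ico.mpr ⟨ha, a.isLt⟩
  · intro x hx
    simp only [mem_filter, mem_univ, true_and, not_lt]
    exact (Finset.mem_Ico.mp hx).1
  · intro a ha; rfl
  · intro x hx; rfl

lemma nal_split (P Q : (Fin d → Bool) → Prop) [DecidablePred P] [DecidablePred Q] :
    (Finset.univ.filter fun f => P f ∧ Q f).card
      + (Finset.univ.filter fun f => P f ∧ ¬ Q f).card
      = (Finset.univ.filter P).card := by
  rw [← Finset.filter_filter, ← Finset.filter_filter]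
  exact Finset.card_filter_add_card_filter_not _

end Counting

section Dist

def eJ (d : ℕ) (f : Fin d → Bool) : JString d := fun i => some (f i)

def gJ (s d : ℕ) (f : Fin d → Bool) : JString d :=
  fun i => if (i:ℕ) < s then none else some (f i)

variable {d s t : ℕ}

lemma nal_one_le_jDist {u v : JString d} (i : Fin d) (a b : Bool)
    (hu : u i = some a) (hv : v i = some b) (hab : a ≠ b) : 1 ≤ jDist u v := by
  rw [jDist]
  exact Finset.card_pos.mpr ⟨i, Finset.mem_filter.mpr ⟨Finset.mem_univ _, a, b, hu, hv, hab⟩⟩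

lemma nal_distAA (f f' : Fin d → Bool) (hf : wt f ≤ t) (hf' : wt f' ≤ t) (hne : f ≠ f') :
    1 ≤ jDist (eJ d f) (eJ d f') ∧ jDist (eJ d f) (eJ d f') ≤ 2 * t := by
  constructor
  · obtain ⟨i, hi⟩ := Function.ne_iff.mp hne
    exact nal_one_le_jDist i (f i) (f' i) rfl rfl hi
  · calc jDist (eJ d f) (eJ d f')
        ≤ ((Finset.univ.filter fun i => f i = true)
            ∪ (Finset.univ.filter fun i => f' i = true)).card := by
          rw [jDist]
          apply Finset.card_le_card
          intro i hi
          simp only [mem_filter, mem_univ, true_and] at hi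
          obtain ⟨a, b, ha, hb, hab⟩ := hi
          simp only [eJ, Option.some.injEq] at ha hb
          rw [Finset.mem_union]
          simp only [mem_filter, mem_univ, true_and]
          subst ha; subst hb
          cases h1 : f i <;> cases h2 : f' i <;> simp_all
      _ ≤ wt f + wt f' := Finset.card_union_le _ _
      _ ≤ 2 * t := by omega

lemma nal_jDist_tail_le (u v : JString d) (hsd : s ≤ d)
    (hv : ∀ i : Fin d, (i:ℕ) < s → v i = none) : jDist u v ≤ d - s := by
  rw [jDist, ← nal_card_tail d s hsd]
  apply Finset.card_le_card
  intro i hi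
  simp only [mem_filter, mem_univ, true_and] at hi ⊢
  obtain ⟨a, b, _, hb, _⟩ := hi
  intro hlt
  rw [hv i hlt] at hb
  cases hb

lemma nal_distAB (hs : 0 < s) (hsd : s ≤ d) (f f' : Fin d → Bool) (hwf : wt f ≤ t)
    (hsupp : ∀ i : Fin d, (i:ℕ) < s → f' i = false) (hwf' : t + 1 ≤ wt f') :
    1 ≤ jDist (eJ d f) (gJ s d f') ∧ jDist (eJ d f) (gJ s d f') ≤ d - s := by
  refine ⟨?_, nal_jDist_tail_le _ _ hsd (fun i hi => by simp [gJ, hi])⟩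
  by_contra h
  push_neg at h
  have h0 : jDist (eJ d f) (gJ s d f') = 0 := by omega
  rw [jDist, Finset.card_eq_zero] at h0
  have hagree : ∀ i : Fin d, ¬ (i:ℕ) < s → f i = f' i := by
    intro i hi
    by_contra hne
    have : i ∈ (Finset.univ.filter fun i => ∃ a b : Bool,
        eJ d f i = some a ∧ gJ s d f' i = some b ∧ a ≠ b) :=
      Finset.mem_filter.mpr ⟨Finset.mem_univ _, f i, f' i, rfl, by simp [gJ, hi], hne⟩
    rw [h0] at this
    exact absurd this (Finset.notMem_empty _)
  have hsub : (Finset.univ.filter fun i => f' i = true)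
      ⊆ (Finset.univ.filter fun i => f i = true) := by
    intro i hi
    simp only [mem_filter, mem_univ, true_and] at hi ⊢
    have his : ¬ (i:ℕ) < s := by
      intro hlt
      rw [hsupp i hlt] at hi
      exact Bool.noConfusion hi
    rw [hagree i his]
    exact hi
  have : wt f' ≤ wt f := by
    rw [wt, wt]
    exact Finset.card_le_card hsub
  omega

lemma nal_distBB (hsd : s ≤ d) (f f' : Fin d → Bool)
    (hsupp : ∀ i : Fin d, (i:ℕ) < s → f i = false)
    (hsupp' : ∀ i : Fin d, (i:ℕ) < s → f' i = false) (hne : f ≠ f') :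
    1 ≤ jDist (gJ s d f) (gJ s d f') ∧ jDist (gJ s d f) (gJ s d f') ≤ d - s := by
  refine ⟨?_, nal_jDist_tail_le _ _ hsd (fun i hi => by simp [gJ, hi])⟩
  obtain ⟨i, hi⟩ := Function.ne_iff.mp hne
  have his : ¬ (i:ℕ) < s := by
    intro hlt
    rw [hsupp i hlt, hsupp' i hlt] at hi
    exact hi rfl
  exact nal_one_le_jDist i (f i) (f' i) (by simp [gJ, his]) (by simp [gJ, his]) hi

lemma nal_jDist_comm (u v : JString d) : jDist u v = jDist v u := by
  rw [jDist, jDist]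
  apply Finset.card_bij' (i := fun x _ => x) (j := fun x _ => x)
  case hi =>
    intro x hx
    simp only [mem_filter, mem_univ, true_and] at hx ⊢
    obtain ⟨a, b, ha, hb, hab⟩ := hx
    exact ⟨b, a, hb, ha, hab.symm⟩
  case hj =>
    intro x hx
    simp only [mem_filter, mem_univ, true_and] at hx ⊢
    obtain ⟨a, b, ha, hb, hab⟩ := hx
    exact ⟨b, a, hb, ha, hab.symm⟩
  case left_inv => intro x hx; rfl
  case right_inv => intro x hx; rfl

end Dist

set_option maxHeartbeats 2000000 in
/-- Let `s` and `d` be even positive integers with `2s ≤ d`. Then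
`n(d-s, d) ≥ (1/2 + 1/2^{s+1}) · (1 - s/√(π(d-s)/2)) · 2^d`. -/
theorem neighborly_asymptotic_lower_bound (s d : ℕ) (hs : 0 < s) (hd : 0 < d)
    (hse : Even s) (hde : Even d) (hsd : 2 * s ≤ d) :
    ((1 : ℝ) / 2 + 1 / 2 ^ (s + 1)) *
        (1 - (s : ℝ) / Real.sqrt (Real.pi * ((d : ℝ) - (s : ℝ)) / 2)) * 2 ^ d
      ≤ (nkd (d - s) d : ℝ) := by
  obtain ⟨sig, hsig⟩ := hse
  obtain ⟨del, hdel⟩ := hde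
  have ht1 : 1 ≤ (d - s) / 2 := by omega
  set t := (d - s) / 2 with htdef
  have ht : d = s + 2 * t := by omega
  have hds : d - s = 2 * t := by omega
  -- precomputed arithmetic facts (omega in a clean context)
  have ha5 : 2 * (d / 2) = d := by omega
  have ha6 : t ≤ d / 2 := by omega
  have ha7 : 1 ≤ d / 2 := by omega
  have ha8 : s + 1 + 2 * t = d + 1 := by omega
  have ha9 : s ≤ d := by omega
  have ha10 : t + (t + s) = d := by omega
  have ha11 : t - 1 + (t + 1) = 2 * t := by omega
  have ha13 : t + s - 1 - t = s - 1 := by omega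
  have ha14 : 0 < t := ht1
  have hw1 : ∀ w : ℕ, (¬ w ≤ t ∧ w ≤ t + s - 1) ↔ (t + 1 ≤ w ∧ w ≤ t + s - 1) := by
    intro w; omega
  have hw2 : ∀ w : ℕ, (¬ w ≤ t ∧ ¬ w ≤ t + s - 1) ↔ t + s ≤ w := by
    intro w; omega
  have hw3 : ∀ w : ℕ, (¬ w ≤ t) ↔ t + 1 ≤ w := by
    intro w; omega
  have hw4 : ∀ w : ℕ, (w ≤ t ∧ w ≤ t - 1) ↔ w ≤ t - 1 := by
    intro w; omega
  have hw5 : ∀ w : ℕ, (w ≤ t ∧ ¬ w ≤ t - 1) ↔ w = t := by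
    intro w; omega
  set D : Finset (Fin d) := Finset.univ.filter fun i => ¬ (i:ℕ) < s with hD
  have hDcard : D.card = 2 * t := by rw [hD, nal_card_tail d s ha9, hds]
  have hDnotmem : ∀ i : Fin d, (i:ℕ) < s → i ∉ D := by
    intro i hi
    simp [hD, hi]
  -- the relevant families of boolean functions
  set Af := Finset.univ.filter (fun f : Fin d → Bool =>
     (∀ i ∉ (Finset.univ : Finset (Fin d)), f i = false) ∧ wt f ≤ t) with hAf
  set Xf := Finset.univ.filter (fun f : Fin d → Bool =>
     (∀ i ∉ (Finset.univ : Finset (Fin d)), f i = false) ∧ ¬ wt f ≤ t) with hXf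
  set Mf := Finset.univ.filter (fun f : Fin d → Bool =>
     (∀ i ∉ (Finset.univ : Finset (Fin d)), f i = false) ∧
       (t + 1 ≤ wt f ∧ wt f ≤ t + s - 1)) with hMf
  set Hf := Finset.univ.filter (fun f : Fin d → Bool =>
     (∀ i ∉ (Finset.univ : Finset (Fin d)), f i = false) ∧ t + s ≤ wt f) with hHf
  set Bf := Finset.univ.filter (fun f : Fin d → Bool =>
     (∀ i ∉ D, f i = false) ∧ t + 1 ≤ wt f) with hBf
  set Lf := Finset.univ.filter (fun f : Fin d → Bool =>
     (∀ i ∉ D, f i = false) ∧ wt f ≤ t) with hLf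
  set LoF := Finset.univ.filter (fun f : Fin d → Bool =>
     (∀ i ∉ D, f i = false) ∧ wt f ≤ t - 1) with hLoF
  set EqF := Finset.univ.filter (fun f : Fin d → Bool =>
     (∀ i ∉ D, f i = false) ∧ wt f = t) with hEqF
  set C1 := d.choose (d / 2) with hC1def
  set C2 := (2*t).choose t with hC2def
  have hunivcard : (Finset.univ : Finset (Fin d)).card = d := by simp
  have hcube : (Finset.univ.filter (fun f : Fin d → Bool =>
      ∀ i ∉ (Finset.univ : Finset (Fin d)), f i = false)).card = 2 ^ d := by
    rw [nal_card_cube, hunivcard]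
  have hcubeB : (Finset.univ.filter (fun f : Fin d → Bool =>
      ∀ i ∉ D, f i = false)).card = 2 ^ (2*t) := by
    rw [nal_card_cube, hDcard]
  -- A-side counting
  have e1 : Af.card + Xf.card = 2 ^ d := by
    rw [hAf, hXf, ← hcube]
    exact nal_split _ _
  have e2 : Mf.card + Hf.card = Xf.card := by
    have h := nal_split (fun f : Fin d → Bool =>
        (∀ i ∉ (Finset.univ : Finset (Fin d)), f i = false) ∧ ¬ wt f ≤ t)
      (fun f => wt f ≤ t + s - 1)
    have hmid : (Finset.univ.filter (fun f : Fin d → Bool =>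
        ((∀ i ∉ (Finset.univ : Finset (Fin d)), f i = false) ∧ ¬ wt f ≤ t)
          ∧ wt f ≤ t + s - 1)) = Mf := by
      rw [hMf]
      refine Finset.filter_congr fun f _ => ?_
      constructor
      · rintro ⟨⟨h1, h2⟩, h3⟩; exact ⟨h1, (hw1 (wt f)).mp ⟨h2, h3⟩⟩
      · rintro ⟨h1, h2⟩
        exact ⟨⟨h1, (hw3 (wt f)).mpr h2.1⟩, h2.2⟩
    have hhiq : (Finset.univ.filter (fun f : Fin d → Bool =>
        ((∀ i ∉ (Finset.univ : Finset (Fin d)), f i = false) ∧ ¬ wt f ≤ t)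
          ∧ ¬ wt f ≤ t + s - 1)) = Hf := by
      rw [hHf]
      refine Finset.filter_congr fun f _ => ?_
      constructor
      · rintro ⟨⟨h1, h2⟩, h3⟩; exact ⟨h1, (hw2 (wt f)).mp ⟨h2, h3⟩⟩
      · rintro ⟨h1, h2⟩
        exact ⟨⟨h1, ((hw2 (wt f)).mpr h2).1⟩, ((hw2 (wt f)).mpr h2).2⟩
    rw [hmid, hhiq, ← hXf] at h
    exact h
  have e3 : Hf.card = Af.card := by
    rw [hHf, hAf]
    exact (nal_card_nbij Finset.univ t (t + s) (by rw [hunivcard]; exact ha10)).symm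
  have hXfval : Xf.card = Mf.card + Af.card := by rw [← e2, e3]
  have hAcount : 2 * Af.card + Mf.card = 2 ^ d := by
    calc 2 * Af.card + Mf.card = Af.card + (Mf.card + Af.card) := by ring
      _ = Af.card + Xf.card := by rw [hXfval]
      _ = 2 ^ d := e1
  have hMidle : Mf.card ≤ (s - 1) * C1 := by
    have h := nal_card_mid_le (Finset.univ : Finset (Fin d)) t (t + s - 1)
    rw [hunivcard, ha13] at h
    rw [hMf, hC1def]
    exact h
  -- B-side counting
  have f1 : Lf.card + Bf.card = 2 ^ (2*t) := by
    have h := nal_split (fun f : Fin d → Bool => ∀ i ∉ D, f i = false)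
      (fun f => wt f ≤ t)
    have hbf : (Finset.univ.filter (fun f : Fin d → Bool =>
        (∀ i ∉ D, f i = false) ∧ ¬ wt f ≤ t)) = Bf := by
      rw [hBf]
      refine Finset.filter_congr fun f _ => ?_
      constructor
      · rintro ⟨h1, h2⟩; exact ⟨h1, (hw3 (wt f)).mp h2⟩
      · rintro ⟨h1, h2⟩; exact ⟨h1, (hw3 (wt f)).mpr h2⟩
    rw [hbf, hcubeB, ← hLf] at h
    exact h
  have f2 : LoF.card + EqF.card = Lf.card := by
    have h := nal_split (fun f : Fin d → Bool => (∀ i ∉ D, f i = false) ∧ wt f ≤ t)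
      (fun f => wt f ≤ t - 1)
    have hlo : (Finset.univ.filter (fun f : Fin d → Bool =>
        ((∀ i ∉ D, f i = false) ∧ wt f ≤ t) ∧ wt f ≤ t - 1)) = LoF := by
      rw [hLoF]
      refine Finset.filter_congr fun f _ => ?_
      constructor
      · rintro ⟨⟨h1, h2⟩, h3⟩; exact ⟨h1, h3⟩
      · rintro ⟨h1, h2⟩
        exact ⟨⟨h1, h2.trans (Nat.sub_le t 1)⟩, h2⟩
    have heqq : (Finset.univ.filter (fun f : Fin d → Bool =>
        ((∀ i ∉ D, f i = false) ∧ wt f ≤ t) ∧ ¬ wt f ≤ t - 1)) = EqF := by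
      rw [hEqF]
      refine Finset.filter_congr fun f _ => ?_
      constructor
      · rintro ⟨⟨h1, h2⟩, h3⟩; exact ⟨h1, (hw5 (wt f)).mp ⟨h2, h3⟩⟩
      · rintro ⟨h1, h2⟩
        exact ⟨⟨h1, ((hw5 (wt f)).mpr h2).1⟩, ((hw5 (wt f)).mpr h2).2⟩
    rw [hlo, heqq, ← hLf] at h
    exact h
  have f3 : LoF.card = Bf.card := by
    rw [hLoF, hBf]
    exact nal_card_nbij D (t - 1) (t + 1) (by rw [hDcard]; exact ha11)
  have f4 : EqF.card = C2 := by
    rw [hEqF, nal_card_level D t, hDcard, hC2def]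
  have hLfval : Lf.card = Bf.card + C2 := by rw [← f2, f3, f4]
  have hBcount : 2 * Bf.card + C2 = 2 ^ (2*t) := by
    calc 2 * Bf.card + C2 = Bf.card + (Bf.card + C2) := by ring
      _ = Bf.card + Lf.card := by rw [hLfval]
      _ = Lf.card + Bf.card := by ring
      _ = 2 ^ (2*t) := f1
  -- the family of joker strings
  set F := Af.image (eJ d) ∪ Bf.image (gJ s d) with hFdef
  have heInj : Function.Injective (eJ d) := by
    intro f f' h
    funext i
    exact Option.some.inj (congrFun h i)
  have hBmem : ∀ f, f ∈ Bf →
      (∀ i : Fin d, (i:ℕ) < s → f i = false) ∧ t + 1 ≤ wt f := by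
    intro f hf
    rw [hBf, Finset.mem_filter] at hf
    exact ⟨fun i hi => hf.2.1 i (hDnotmem i hi), hf.2.2⟩
  have hAmem : ∀ f, f ∈ Af → wt f ≤ t := by
    intro f hf
    rw [hAf, Finset.mem_filter] at hf
    exact hf.2.2
  have hgInj : Set.InjOn (gJ s d) Bf := by
    intro f hf f' hf' h
    funext i
    by_cases hi : (i:ℕ) < s
    · rw [(hBmem f hf).1 i hi, (hBmem f' hf').1 i hi]
    · have := congrFun h i
      simpa [gJ, hi] using this
  have hdisj : Disjoint (Af.image (eJ d)) (Bf.image (gJ s d)) := by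
    rw [Finset.disjoint_left]
    rintro u hu hv
    obtain ⟨f, hf, rfl⟩ := Finset.mem_image.mp hu
    obtain ⟨f', hf', hgf⟩ := Finset.mem_image.mp hv
    have := congrFun hgf (⟨0, hd⟩ : Fin d)
    simp [gJ, eJ, hs] at this
  have hFcard : F.card = Af.card + Bf.card := by
    rw [hFdef, Finset.card_union_of_disjoint hdisj,
      Finset.card_image_of_injective _ heInj, Finset.card_image_of_injOn hgInj]
  -- the distance conditions
  have hgood : ∀ u ∈ F, ∀ v ∈ F, u ≠ v → 1 ≤ jDist u v ∧ jDist u v ≤ d - s := by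
    intro u hu v hv huv
    rw [hFdef, Finset.mem_union] at hu hv
    rcases hu with hu | hu <;> rcases hv with hv | hv
    · obtain ⟨f, hf, rfl⟩ := Finset.mem_image.mp hu
      obtain ⟨f', hf', rfl⟩ := Finset.mem_image.mp hv
      have hne : f ≠ f' := fun h => huv (by rw [h])
      obtain ⟨x1, x2⟩ := nal_distAA (t := t) f f' (hAmem f hf) (hAmem f' hf') hne
      exact ⟨x1, by rw [hds]; exact x2⟩
    · obtain ⟨f, hf, rfl⟩ := Finset.mem_image.mp hu
      obtain ⟨f', hf', rfl⟩ := Finset.mem_image.mp hv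
      exact nal_distAB hs ha9 f f' (hAmem f hf) (hBmem f' hf').1 (hBmem f' hf').2
    · obtain ⟨f, hf, rfl⟩ := Finset.mem_image.mp hu
      obtain ⟨f', hf', rfl⟩ := Finset.mem_image.mp hv
      rw [nal_jDist_comm]
      exact nal_distAB hs ha9 f' f (hAmem f' hf') (hBmem f hf).1 (hBmem f hf).2
    · obtain ⟨f, hf, rfl⟩ := Finset.mem_image.mp hu
      obtain ⟨f', hf', rfl⟩ := Finset.mem_image.mp hv
      have hne : f ≠ f' := fun h => huv (by rw [h])
      exact nal_distBB ha9 f f' (hBmem f hf).1 (hBmem f' hf').1 hne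
  -- nkd is at least the size of the family
  have hbdd : BddAbove {m | ∃ G : Finset (JString d),
      (∀ u ∈ G, ∀ v ∈ G, u ≠ v → 1 ≤ jDist u v ∧ jDist u v ≤ d - s) ∧ G.card = m} := by
    refine ⟨Fintype.card (JString d), ?_⟩
    rintro m ⟨G, -, rfl⟩
    exact le_of_le_of_eq (Finset.card_le_univ G) Finset.card_univ
  have hnkd : F.card ≤ nkd (d - s) d := by
    rw [nkd]
    exact le_csSup hbdd ⟨F, hgood, rfl⟩
  -- real arithmetic
  have hdr : (d:ℝ) - s = 2 * t := by
    have := congrArg (Nat.cast : ℕ → ℝ) ht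
    push_cast at this
    linarith
  have hsqrt : Real.sqrt (Real.pi * ((d:ℝ) - s) / 2) = Real.sqrt (Real.pi * t) := by
    rw [hdr]; congr 1; ring
  have htpos : (0:ℝ) < t := by exact_mod_cast ha14
  set u := Real.sqrt (Real.pi * t) with hudef
  have hu : 0 < u := Real.sqrt_pos.mpr (by positivity)
  have hC1le : (C1:ℝ) * u ≤ 2 ^ d := by
    have hC1cb : C1 = Nat.centralBinom (d / 2) := by
      rw [hC1def, Nat.centralBinom]
      congr 1
      exact ha5.symm
    have htle : (t:ℝ) ≤ ((d/2 : ℕ) : ℝ) := by exact_mod_cast ha6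
    calc (C1:ℝ) * u ≤ (C1:ℝ) * Real.sqrt (Real.pi * ((d/2 : ℕ):ℝ)) := by
          apply mul_le_mul_of_nonneg_left
            (Real.sqrt_le_sqrt (by nlinarith [Real.pi_pos])) (by positivity)
      _ ≤ 4 ^ (d/2) := by rw [hC1cb]; exact nal_centralBinom_le _ ha7
      _ = 2 ^ d := by
          rw [show (4:ℝ) = 2^2 by norm_num, ← pow_mul, ha5]
  have hC2le : (C2:ℝ) * u ≤ 2 ^ (2*t) := by
    have hC2cb : C2 = Nat.centralBinom t := by rw [hC2def, Nat.centralBinom]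
    calc (C2:ℝ) * u ≤ 4 ^ t := by rw [hC2cb, hudef]; exact nal_centralBinom_le t ht1
      _ = 2 ^ (2*t) := by rw [show (4:ℝ) = 2^2 by norm_num, ← pow_mul]
  have hA' : (Af.card : ℝ) = ((2:ℝ)^d - Mf.card) / 2 := by
    have := congrArg (Nat.cast : ℕ → ℝ) hAcount
    push_cast at this
    linarith
  have hB' : (Bf.card : ℝ) = ((2:ℝ)^(2*t) - C2) / 2 := by
    have := congrArg (Nat.cast : ℕ → ℝ) hBcount
    push_cast at this
    linarith
  have hMle : (Mf.card : ℝ) ≤ ((s:ℝ) - 1) * C1 := by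
    have h : ((Mf.card : ℕ) : ℝ) ≤ (((s - 1) * C1 : ℕ) : ℝ) := Nat.cast_le.mpr hMidle
    rwa [Nat.cast_mul, Nat.cast_sub hs, Nat.cast_one] at h
  have hXpos : (0:ℝ) < 2^d := by positivity
  have hYpos : (0:ℝ) < (2:ℝ)^(2*t) := by positivity
  have hs1 : (1:ℝ) ≤ s := by exact_mod_cast hs
  have hkey : ((Mf.card : ℝ) + C2) * u ≤ ((2:ℝ)^d + 2^(2*t)) * s := by
    have h1 : (Mf.card : ℝ) * u ≤ ((s:ℝ) - 1) * (2^d) := by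
      calc (Mf.card : ℝ) * u ≤ (((s:ℝ) - 1) * C1) * u :=
            mul_le_mul_of_nonneg_right hMle hu.le
        _ = ((s:ℝ) - 1) * (C1 * u) := by ring
        _ ≤ ((s:ℝ) - 1) * (2^d) :=
            mul_le_mul_of_nonneg_left hC1le (by linarith only [hs1])
    have h2 : 0 ≤ ((s:ℝ) - 1) * (2:ℝ)^(2*t) := mul_nonneg (by linarith only [hs1]) hYpos.le
    have h3 : ((Mf.card : ℝ) + C2) * u = (Mf.card : ℝ) * u + (C2:ℝ) * u := by ring
    rw [h3]
    linarith only [h1, hC2le, h2, hXpos.le, hYpos.le]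
  have hXY : (2:ℝ)^d = 2^(s+1) * 2^(2*t) / 2 := by
    rw [← pow_add, show s + 1 + 2*t = d + 1 from ha8, pow_succ]
    ring
  have hid : ((1:ℝ)/2 + 1/2^(s+1)) * (2:ℝ)^d = ((2:ℝ)^d + 2^(2*t)) / 2 := by
    have hP : ((2:ℝ)^(s+1)) ≠ 0 := by positivity
    rw [hXY]
    field_simp
  have hmain : ((1:ℝ)/2 + 1/2^(s+1)) * (1 - (s:ℝ)/u) * 2^d ≤ (F.card : ℝ) := by
    have hexp : ((1:ℝ)/2 + 1/2^(s+1)) * (1 - (s:ℝ)/u) * 2^d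
        = ((2:ℝ)^d + 2^(2*t)) / 2 - (((2:ℝ)^d + 2^(2*t)) * s / u) / 2 := by
      calc ((1:ℝ)/2 + 1/2^(s+1)) * (1 - (s:ℝ)/u) * 2^d
          = (((1:ℝ)/2 + 1/2^(s+1)) * 2^d) * (1 - (s:ℝ)/u) := by ring
        _ = (((2:ℝ)^d + 2^(2*t)) / 2) * (1 - (s:ℝ)/u) := by rw [hid]
        _ = ((2:ℝ)^d + 2^(2*t)) / 2 - (((2:ℝ)^d + 2^(2*t)) * s / u) / 2 := by ring
    rw [hexp, hFcard]
    push_cast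
    rw [hA', hB']
    have hdiv : (Mf.card : ℝ) + C2 ≤ ((2:ℝ)^d + 2^(2*t)) * s / u := by
      rw [le_div_iff₀ hu]
      exact hkey
    linarith
  rw [hsqrt]
  calc ((1:ℝ)/2 + 1/2^(s+1)) * (1 - (s:ℝ)/u) * 2^d ≤ (F.card : ℝ) := hmain
    _ ≤ (nkd (d - s) d : ℝ) := by exact_mod_cast hnkd
end
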